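/- arXiv:1702.04007 — 6 statements merged into one kernel-verified Lean document; each statement's English description precedes it below -/
import Mathlib

section
/- Let m be a positive integer and x a real number. Then in the ring of formal power series ℝ[[z]], the exponential generating function of the Dowling polynomials satisfies ∑_{n≥0} D_m(n,x) z^n/n! = e^z · exp(x(e^{mz} − 1)/m). -/
/-- Whitney numbers of the second kind:
`W_m(n,k) = (1/(m^k k!)) ∑_{i=0}^k (−1)^{k−i} C(k,i) (mi+1)^n`. -/
noncomputable def whitney2 (m n k : ℕ) : ℝ :=
  (1 / ((m : ℝ) ^ k * k.factorial)) *
    ∑ i ∈ Finset.range (k + 1), (-1 : ℝ) ^ (k - i) * (k.choose i) * ((m : ℝ) * i + 1) ^ n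

/-- Dowling polynomials `D_m(n,x) = ∑_{k=0}^n W_m(n,k) x^k`. -/
noncomputable def dowling (m n : ℕ) (x : ℝ) : ℝ :=
  ∑ k ∈ Finset.range (n + 1), whitney2 m n k * x ^ k

/-- Formal exponential `exp(f) = ∑_k f^k/k!` of a power series, given coefficientwise;
for `f` with zero constant term, `coeff n (f^k) = 0` whenever `k > n`, so this is the
usual formal exponential. -/
noncomputable def expPS (f : PowerSeries ℝ) : PowerSeries ℝ :=
  PowerSeries.mk fun n =>
    ∑ k ∈ Finset.range (n + 1), (PowerSeries.coeff n (f ^ k)) / k.factorial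

open PowerSeries Finset in
/-- The EGF of the Dowling polynomials is `e^z · exp(x(e^{mz} − 1)/m)` in `ℝ[[z]]`. -/
theorem dowling_egf (m : ℕ) (hm : 0 < m) (x : ℝ) :
    PowerSeries.mk (fun n => dowling m n x / n.factorial) =
      PowerSeries.exp ℝ *
        expPS (PowerSeries.C (x / m) *
          (PowerSeries.rescale (m : ℝ) (PowerSeries.exp ℝ) - 1)) := by
  set g : PowerSeries ℝ := C (x / m) * (rescale (m : ℝ) (exp ℝ) - 1) with hgdef
  have hm0 : (m : ℝ) ≠ 0 := Nat.cast_ne_zero.mpr hm.ne'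
  have hg0 : constantCoeff g = 0 := by
    have h1 : constantCoeff (rescale (m : ℝ) (exp ℝ)) = 1 := by
      rw [← coeff_zero_eq_constantCoeff_apply, coeff_rescale, pow_zero, one_mul,
        coeff_zero_eq_constantCoeff_apply, constantCoeff_exp]
    rw [hgdef, map_mul, map_sub, h1, map_one, sub_self, mul_zero]
  have hvanish : ∀ n k : ℕ, n < k → coeff n (g ^ k) = 0 := by
    intro n k h
    have hd : (X : ℝ⟦X⟧) ^ k ∣ g ^ k :=
      pow_dvd_pow_of_dvd (X_dvd_iff.mpr hg0) k
    exact (X_pow_dvd_iff.mp hd) n h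
  have hresc : ∀ i : ℕ, exp ℝ * (rescale (m : ℝ) (exp ℝ)) ^ i
      = rescale ((m : ℝ) * i + 1) (exp ℝ) := by
    intro i
    have h1 : (rescale (m : ℝ) (exp ℝ)) ^ i = rescale ((i : ℝ) * m) (exp ℝ) := by
      rw [← map_pow, exp_pow_eq_rescale_exp, rescale_rescale]
    have h2 : exp ℝ = rescale (1 : ℝ) (exp ℝ) := by
      rw [rescale_one, RingHom.id_apply]
    have h3 : (1 : ℝ) + i * m = (m : ℝ) * i + 1 := by ring
    rw [h1]
    nth_rewrite 1 [h2]
    rw [exp_mul_exp_eq_exp_add, h3]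
  have key : ∀ n k : ℕ, coeff n (exp ℝ * g ^ k) =
      (x / m) ^ k / n.factorial *
        ∑ i ∈ Finset.range (k + 1),
          (-1 : ℝ) ^ (k - i) * (k.choose i) * ((m : ℝ) * i + 1) ^ n := by
    intro n k
    have hterm : ∀ i : ℕ,
        exp ℝ * (C ((x / m) ^ k) *
          ((-1 : ℝ⟦X⟧) ^ (i + k) * (rescale (m : ℝ) (exp ℝ)) ^ i * 1 ^ (k - i)
            * (k.choose i : ℝ⟦X⟧)))
        = C ((x / m) ^ k * ((-1 : ℝ) ^ (i + k) * (k.choose i)))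
            * rescale ((m : ℝ) * i + 1) (exp ℝ) := by
      intro i
      rw [← hresc i]
      simp only [map_mul, map_pow, map_natCast, map_neg, map_one, one_pow]
      ring
    have hgk : exp ℝ * g ^ k = ∑ i ∈ Finset.range (k + 1),
        C ((x / m) ^ k * ((-1 : ℝ) ^ (i + k) * (k.choose i)))
          * rescale ((m : ℝ) * i + 1) (exp ℝ) := by
      rw [hgdef, mul_pow, ← map_pow, sub_pow, Finset.mul_sum, Finset.mul_sum]
      exact Finset.sum_congr rfl fun i _ => hterm i
    have hexp : ∀ c : ℝ, ∀ n : ℕ, coeff n (rescale c (exp ℝ)) = c ^ n / n.factorial := by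
      intro c n
      rw [coeff_rescale, coeff_exp]
      push_cast
      ring
    rw [hgk, map_sum, Finset.mul_sum]
    refine Finset.sum_congr rfl fun i hi => ?_
    rw [coeff_C_mul, hexp]
    rw [Finset.mem_range] at hi
    have hsgn : (-1 : ℝ) ^ (i + k) = (-1 : ℝ) ^ (k - i) := by
      rw [show i + k = (k - i) + 2 * i by omega, pow_add, pow_mul]
      simp
    rw [hsgn]; ring
  ext n
  rw [coeff_mk]
  have hR : coeff n (exp ℝ * expPS g) =
      ∑ k ∈ Finset.range (n + 1), coeff n (exp ℝ * g ^ k) / k.factorial := by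
    rw [coeff_mul]
    have step : ∀ p ∈ antidiagonal n,
        coeff p.1 (exp ℝ) * coeff p.2 (expPS g)
        = ∑ k ∈ Finset.range (n + 1),
            coeff p.1 (exp ℝ) * coeff p.2 (g ^ k) / k.factorial := by
      intro p hp
      rw [Finset.HasAntidiagonal.mem_antidiagonal] at hp
      have hple : p.2 ≤ n := le_of_add_le_right hp.le
      rw [expPS, coeff_mk, Finset.mul_sum]
      rw [Finset.sum_subset (Finset.range_subset_range.mpr (by omega : p.2 + 1 ≤ n + 1))]
      · exact Finset.sum_congr rfl fun k _ => by ring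
      · intro k _ hk
        rw [Finset.mem_range, not_lt] at hk
        rw [hvanish p.2 k (by omega), zero_div, mul_zero]
    rw [Finset.sum_congr rfl step, Finset.sum_comm]
    refine Finset.sum_congr rfl fun k _ => ?_
    rw [coeff_mul, Finset.sum_div]
  rw [hR]
  rw [dowling, Finset.sum_div]
  refine Finset.sum_congr rfl fun k _ => ?_
  rw [key, whitney2, div_pow]
  have hkf : (k.factorial : ℝ) ≠ 0 := Nat.cast_ne_zero.mpr k.factorial_ne_zero
  have hnf : (n.factorial : ℝ) ≠ 0 := Nat.cast_ne_zero.mpr n.factorial_ne_zero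
  field_simp
end

section
/- Let m be a positive integer and x a real number. Define polynomials P_n ∈ ℝ[z] by P_0 = 1, P_1 = z − (1+x), and P_n = (z − (1 + x + (n−1)m))·P_{n−1} − (n−1)·m·x·P_{n−2} for n ≥ 2. Let L : ℝ[z] → ℝ be the unique linear functional with L(z^n) = D_m(n,x) for all n ≥ 0. Then L(P_i · P_j) = 0 whenever i ≠ j; that is, the Dowling polynomials D_m(n,x) are the moments of the orthogonal polynomial family (P_n). -/
/-- `P_0 = 1`, `P_1 = z − (1+x)`,
`P_n = (z − (1 + x + (n−1)m))·P_{n−1} − (n−1)·m·x·P_{n−2}` for `n ≥ 2`. -/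
noncomputable def dowlingOP (m : ℕ) (x : ℝ) : ℕ → Polynomial ℝ
  | 0 => 1
  | 1 => Polynomial.X - Polynomial.C (1 + x)
  | (n + 2) =>
      (Polynomial.X - Polynomial.C (1 + x + ((n : ℝ) + 1) * m)) * dowlingOP m x (n + 1) -
        Polynomial.C (((n : ℝ) + 1) * m * x) * dowlingOP m x n

namespace DowlingAux

open Polynomial Finset

noncomputable def ww (m : ℕ) (x : ℝ) (i : ℕ) : ℝ := (x / m) ^ i / (i.factorial : ℝ)

lemma nat_pow_le (i j : ℕ) : i ^ j * i.factorial ≤ (i + j).factorial := by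
  induction j with
  | zero => simp
  | succ j ih =>
      calc i ^ (j+1) * i.factorial = i * (i ^ j * i.factorial) := by ring
        _ ≤ i * (i + j).factorial := Nat.mul_le_mul_left _ ih
        _ ≤ (i + j + 1) * (i + j).factorial := Nat.mul_le_mul_right _ (by omega)
        _ = (i + (j+1)).factorial := by rw [← Nat.factorial_succ]; ring_nf

lemma choose_le_two_pow' (n k : ℕ) : n.choose k ≤ 2 ^ n := by
  rcases le_or_gt k n with h | h
  · calc n.choose k ≤ ∑ i ∈ range (n+1), n.choose i :=
        Finset.single_le_sum (fun i _ => Nat.zero_le _) (by simp [Nat.lt_succ_iff, h])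
      _ = 2 ^ n := Nat.sum_range_choose n
  · simp [Nat.choose_eq_zero_of_lt h]

lemma nat_pow_le' (i j : ℕ) : i ^ j ≤ 2 ^ (i + j) * j.factorial := by
  have h1 : i ^ j * i.factorial ≤ (i + j).factorial := nat_pow_le i j
  have h2 : (i + j).factorial = (i+j).choose j * j.factorial * i.factorial := by
    have := Nat.choose_mul_factorial_mul_factorial (show j ≤ i + j by omega)
    simpa [Nat.add_sub_cancel] using this.symm
  have h3 : (i+j).choose j ≤ 2 ^ (i + j) := choose_le_two_pow' _ _
  have := h1.trans_eq h2
  have h4 : i ^ j * i.factorial ≤ (2 ^ (i+j) * j.factorial) * i.factorial := by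
    calc i ^ j * i.factorial ≤ (i+j).choose j * j.factorial * i.factorial := this
      _ ≤ (2 ^ (i+j) * j.factorial) * i.factorial := by
          apply Nat.mul_le_mul_right; exact Nat.mul_le_mul_right _ h3
  exact Nat.le_of_mul_le_mul_right h4 (Nat.factorial_pos i)

lemma summable_base (r : ℝ) (j : ℕ) :
    Summable (fun i : ℕ => r ^ i / i.factorial * (i : ℝ) ^ j) := by
  rw [← summable_abs_iff]
  have hmaj := (Real.summable_pow_div_factorial (2 * |r|)).mul_left ((2:ℝ) ^ j * j.factorial)
  apply Summable.of_nonneg_of_le (fun i => abs_nonneg _) _ hmaj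
  intro i
  have h1 : |r ^ i / (i.factorial:ℝ) * (i:ℝ) ^ j| = |r| ^ i / (i.factorial:ℝ) * (i:ℝ) ^ j := by
    rw [abs_mul, abs_div, abs_pow, abs_pow]
    simp [Nat.abs_cast]
  rw [h1]
  have h2 : ((i:ℝ)) ^ j ≤ 2 ^ (i + j) * j.factorial := by
    exact_mod_cast nat_pow_le' i j
  have h3 : (0:ℝ) < (i.factorial : ℝ) := by exact_mod_cast i.factorial_pos
  calc |r| ^ i / (i.factorial:ℝ) * (i:ℝ) ^ j
      ≤ |r| ^ i / (i.factorial:ℝ) * (2 ^ (i + j) * j.factorial) := by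
        apply mul_le_mul_of_nonneg_left h2
        positivity
    _ = (2:ℝ) ^ j * j.factorial * ((2 * |r|) ^ i / i.factorial) := by
        rw [pow_add, mul_pow]; ring

lemma summQ (m : ℕ) (x : ℝ) (q : Polynomial ℝ) :
    Summable (fun i : ℕ => ww m x i * q.eval (i : ℝ)) := by
  have h : ∀ i : ℕ, ww m x i * q.eval (i:ℝ)
      = ∑ k ∈ range (q.natDegree + 1), q.coeff k * ((x / m) ^ i / i.factorial * (i:ℝ) ^ k) := by
    intro i
    rw [Polynomial.eval_eq_sum_range, Finset.mul_sum]
    exact Finset.sum_congr rfl fun k _ => by unfold ww; ring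
  have hs : Summable (fun i : ℕ => ∑ k ∈ range (q.natDegree + 1),
      q.coeff k * ((x / m) ^ i / i.factorial * (i:ℝ) ^ k)) :=
    summable_sum fun k _ => (summable_base (x/m) k).mul_left _
  exact hs.congr fun i => (h i).symm

lemma summP (m : ℕ) (x : ℝ) (p : Polynomial ℝ) :
    Summable (fun i : ℕ => ww m x i * p.eval (1 + (m:ℝ) * i)) := by
  have := summQ m x (p.comp (Polynomial.C 1 + Polynomial.C (m:ℝ) * Polynomial.X))
  exact this.congr fun i => by simp [Polynomial.eval_comp]

lemma summPi (m : ℕ) (x : ℝ) (p : Polynomial ℝ) :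
    Summable (fun i : ℕ => ww m x i * ((i:ℝ) * p.eval (1 + (m:ℝ) * i))) := by
  have := summQ m x (Polynomial.X * p.comp (Polynomial.C 1 + Polynomial.C (m:ℝ) * Polynomial.X))
  exact this.congr fun i => by simp [Polynomial.eval_comp]


lemma evalrec (m : ℕ) (x : ℝ) (a : ℕ) (t : ℝ) :
    (dowlingOP m x (a+1)).eval t
      = (t - (1 + x + (a:ℝ) * m)) * (dowlingOP m x a).eval t
        - (a:ℝ) * m * x * (dowlingOP m x (a-1)).eval t := by
  cases a with
  | zero => simp [dowlingOP]
  | succ n =>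
      show (dowlingOP m x (n+2)).eval t = _
      simp only [dowlingOP, eval_sub, eval_mul, eval_X, eval_C, Nat.add_sub_cancel]
      push_cast
      ring

lemma lower (m : ℕ) (x : ℝ) :
    ∀ (n : ℕ) (t : ℝ), (dowlingOP m x n).eval (t + m)
      = (dowlingOP m x n).eval t + (n:ℝ) * m * (dowlingOP m x (n-1)).eval t := by
  intro n
  induction n using Nat.strong_induction_on with
  | _ n ih =>
    match n with
    | 0 => intro t; simp [dowlingOP]
    | 1 => intro t; simp [dowlingOP]; ring
    | (n+2) =>
      intro t
      have e1 := evalrec m x (n+1) (t+m)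
      have e2 := evalrec m x (n+1) t
      have e3 := evalrec m x n t
      have h1 := ih (n+1) (by omega) t
      have h2 := ih n (by omega) t
      simp only [Nat.add_sub_cancel] at *
      push_cast at e1 e2 e3 h1 h2 ⊢
      linear_combination e1 + (t + m - (1 + x + ((n:ℝ)+1)*m)) * h1 - ((n:ℝ)+1)*m*x * h2
        - e2 - ((n:ℝ)+1)*m * e3


noncomputable def EE (m : ℕ) (x : ℝ) (a b : ℕ) : ℝ :=
  ∑' i : ℕ, ww m x i * ((dowlingOP m x a).eval (1 + (m:ℝ) * i) * (dowlingOP m x b).eval (1 + (m:ℝ) * i))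

lemma summEE (m : ℕ) (x : ℝ) (a b : ℕ) :
    Summable (fun i : ℕ => ww m x i *
      ((dowlingOP m x a).eval (1 + (m:ℝ) * i) * (dowlingOP m x b).eval (1 + (m:ℝ) * i))) :=
  (summP m x (dowlingOP m x a * dowlingOP m x b)).congr fun i => by rw [eval_mul]

lemma Esymm (m : ℕ) (x : ℝ) (a b : ℕ) : EE m x a b = EE m x b a := by
  unfold EE
  exact tsum_congr fun i => by ring

lemma shift (m : ℕ) (x : ℝ) (p : Polynomial ℝ) :
    ∑' i : ℕ, ww m x i * ((i:ℝ) * p.eval (1 + (m:ℝ) * i))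
      = (x / m) * ∑' i : ℕ, ww m x i * p.eval (1 + (m:ℝ) * i + m) := by
  rw [Summable.tsum_eq_zero_add (summPi m x p)]
  simp only [Nat.cast_zero, zero_mul, mul_zero, zero_add]
  rw [← tsum_mul_left]
  apply tsum_congr
  intro i
  have hfac : ((i+1).factorial : ℝ) = ((i:ℝ)+1) * (i.factorial : ℝ) := by
    rw [Nat.factorial_succ]; push_cast; ring
  have hne1 : ((i:ℝ)+1) ≠ 0 := by positivity
  have hne2 : ((i.factorial:ℝ)) ≠ 0 := by
    exact_mod_cast (Nat.factorial_pos i).ne'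
  have harg : (1:ℝ) + (m:ℝ) * ((i:ℕ)+1:ℕ) = 1 + (m:ℝ) * i + m := by push_cast; ring
  unfold ww
  rw [harg, hfac]
  set r := x / (m:ℝ) with hr
  set E := p.eval (1 + (m:ℝ) * i + (m:ℝ)) with hE
  rw [pow_succ]
  push_cast
  field_simp

lemma Erec (m : ℕ) (x : ℝ) (hm : 0 < m) (a b : ℕ) :
    EE m x (a+1) b = -((a:ℝ) * m) * EE m x a b + (b:ℝ)*m*x * EE m x a (b-1)
      + (a:ℝ)*(b:ℝ)*m^2*x * EE m x (a-1) (b-1) := by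
  have hM : (m:ℝ) ≠ 0 := Nat.cast_ne_zero.2 hm.ne'
  have hpt : ∀ i : ℕ, ww m x i *
      ((dowlingOP m x (a+1)).eval (1 + (m:ℝ)*i) * (dowlingOP m x b).eval (1 + (m:ℝ)*i))
    = (m:ℝ) * (ww m x i * ((i:ℝ) * (dowlingOP m x a * dowlingOP m x b).eval (1 + (m:ℝ)*i)))
      - ((x + (a:ℝ)*m) * (ww m x i * ((dowlingOP m x a).eval (1 + (m:ℝ)*i) * (dowlingOP m x b).eval (1 + (m:ℝ)*i)))
        + ((a:ℝ)*m*x) * (ww m x i * ((dowlingOP m x (a-1)).eval (1 + (m:ℝ)*i) * (dowlingOP m x b).eval (1 + (m:ℝ)*i)))) := by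
    intro i
    rw [evalrec m x a (1 + (m:ℝ)*i), eval_mul]
    ring
  have S1 : Summable (fun i : ℕ => (m:ℝ) * (ww m x i * ((i:ℝ) * (dowlingOP m x a * dowlingOP m x b).eval (1 + (m:ℝ)*i)))) :=
    (summPi m x _).mul_left _
  have S2 : Summable (fun i : ℕ => (x + (a:ℝ)*m) * (ww m x i * ((dowlingOP m x a).eval (1 + (m:ℝ)*i) * (dowlingOP m x b).eval (1 + (m:ℝ)*i)))) :=
    (summEE m x a b).mul_left _
  have S3 : Summable (fun i : ℕ => ((a:ℝ)*m*x) * (ww m x i * ((dowlingOP m x (a-1)).eval (1 + (m:ℝ)*i) * (dowlingOP m x b).eval (1 + (m:ℝ)*i)))) :=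
    (summEE m x (a-1) b).mul_left _
  have step1 : EE m x (a+1) b
      = (m:ℝ) * ∑' i : ℕ, ww m x i * ((i:ℝ) * (dowlingOP m x a * dowlingOP m x b).eval (1 + (m:ℝ)*i))
        - ((x + (a:ℝ)*m) * EE m x a b + ((a:ℝ)*m*x) * EE m x (a-1) b) := by
    unfold EE
    rw [tsum_congr hpt, Summable.tsum_sub S1 (S2.add S3), Summable.tsum_add S2 S3,
      tsum_mul_left, tsum_mul_left, tsum_mul_left]
  have hpt2 : ∀ i : ℕ, ww m x i * (dowlingOP m x a * dowlingOP m x b).eval (1 + (m:ℝ)*i + m)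
      = ww m x i * ((dowlingOP m x a).eval (1 + (m:ℝ)*i) * (dowlingOP m x b).eval (1 + (m:ℝ)*i))
        + (b:ℝ)*m * (ww m x i * ((dowlingOP m x a).eval (1 + (m:ℝ)*i) * (dowlingOP m x (b-1)).eval (1 + (m:ℝ)*i)))
        + ((a:ℝ)*m * (ww m x i * ((dowlingOP m x (a-1)).eval (1 + (m:ℝ)*i) * (dowlingOP m x b).eval (1 + (m:ℝ)*i)))
        + (a:ℝ)*(b:ℝ)*m^2 * (ww m x i * ((dowlingOP m x (a-1)).eval (1 + (m:ℝ)*i) * (dowlingOP m x (b-1)).eval (1 + (m:ℝ)*i)))) := by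
    intro i
    rw [eval_mul, lower m x a (1 + (m:ℝ)*i), lower m x b (1 + (m:ℝ)*i)]
    ring
  have T1 : Summable (fun i : ℕ => ww m x i * ((dowlingOP m x a).eval (1 + (m:ℝ)*i) * (dowlingOP m x b).eval (1 + (m:ℝ)*i))) := summEE m x a b
  have T2 : Summable (fun i : ℕ => (b:ℝ)*m * (ww m x i * ((dowlingOP m x a).eval (1 + (m:ℝ)*i) * (dowlingOP m x (b-1)).eval (1 + (m:ℝ)*i)))) :=
    (summEE m x a (b-1)).mul_left _
  have T3 : Summable (fun i : ℕ => (a:ℝ)*m * (ww m x i * ((dowlingOP m x (a-1)).eval (1 + (m:ℝ)*i) * (dowlingOP m x b).eval (1 + (m:ℝ)*i)))) :=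
    (summEE m x (a-1) b).mul_left _
  have T4 : Summable (fun i : ℕ => (a:ℝ)*(b:ℝ)*m^2 * (ww m x i * ((dowlingOP m x (a-1)).eval (1 + (m:ℝ)*i) * (dowlingOP m x (b-1)).eval (1 + (m:ℝ)*i)))) :=
    (summEE m x (a-1) (b-1)).mul_left _
  have step2 : ∑' i : ℕ, ww m x i * ((i:ℝ) * (dowlingOP m x a * dowlingOP m x b).eval (1 + (m:ℝ)*i))
      = (x/m) * (EE m x a b + (b:ℝ)*m * EE m x a (b-1)
          + ((a:ℝ)*m * EE m x (a-1) b + (a:ℝ)*(b:ℝ)*m^2 * EE m x (a-1) (b-1))) := by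
    rw [shift m x (dowlingOP m x a * dowlingOP m x b), tsum_congr hpt2,
      Summable.tsum_add (T1.add T2) (T3.add T4), Summable.tsum_add T1 T2, Summable.tsum_add T3 T4,
      tsum_mul_left, tsum_mul_left, tsum_mul_left]
    rfl
  rw [step1, step2]
  field_simp
  ring

lemma Eorth (m : ℕ) (x : ℝ) (hm : 0 < m) :
    ∀ s a b : ℕ, a + b ≤ s → a ≠ b → EE m x a b = 0 := by
  intro s
  induction s with
  | zero => intro a b h hne; exact absurd (by omega : a = b) hne
  | succ s ih =>
    suffices H : ∀ a b : ℕ, a + b ≤ s + 1 → b < a → EE m x a b = 0 by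
      intro a b h hne
      rcases Nat.lt_or_ge b a with h' | h'
      · exact H a b h h'
      · rw [Esymm]; exact H b a (by omega) (by omega)
    intro a b h hlt
    obtain ⟨a', rfl⟩ : ∃ a', a = a' + 1 := ⟨a - 1, by omega⟩
    rw [Erec m x hm a' b]
    rcases eq_or_ne a' b with rfl | hne'
    · -- diagonal-adjacent case : EE (b+1) b with a' = b
      by_cases hb : a' = 0
      · subst hb; simp
      · obtain ⟨b', rfl⟩ : ∃ b', a' = b' + 1 := ⟨a' - 1, by omega⟩
        have hbb : EE m x (b'+1) (b'+1) = ((b':ℝ)+1)*m*x * EE m x b' b' := by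
          rw [Erec m x hm b' (b'+1)]
          simp only [Nat.add_sub_cancel]
          have z1 : EE m x b' (b'+1) = 0 := by
            rw [Esymm]; exact ih (b'+1) b' (by omega) (by omega)
          rcases Nat.eq_zero_or_pos b' with rfl | hb'
          · simp [z1]
          · have z2 : EE m x (b'-1) b' = 0 := ih (b'-1) b' (by omega) (by omega)
            rw [z1, z2]
            push_cast
            ring
        have z3 : EE m x (b'+1) b' = 0 := ih (b'+1) b' (by omega) (by omega)
        simp only [Nat.add_sub_cancel]
        rw [hbb, z3]
        push_cast
        ring
    · have hb' : b < a' := by omega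
      have z1 : EE m x a' b = 0 := ih a' b (by omega) hne'
      by_cases hb : b = 0
      · subst hb; simp [z1]
      · have z2 : EE m x a' (b-1) = 0 := ih a' (b-1) (by omega) (by omega)
        have z4 : EE m x (a'-1) (b-1) = 0 := ih (a'-1) (b-1) (by omega) (by omega)
        rw [z1, z2, z4]
        ring


noncomputable def alt (k : ℕ) (f : ℕ → ℝ) : ℝ :=
  ∑ j ∈ range (k+1), (-1:ℝ)^j * (k.choose j : ℝ) * f j

lemma alt_step (k : ℕ) (f : ℕ → ℝ) :
    alt (k+1) f = - alt k (fun j => f (j+1) - f j) := by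
  have key : ∀ j ∈ range (k+1),
      (-((-1:ℝ)^j * (k.choose j : ℝ) * (f (j+1) - f j))
        - (-1:ℝ)^(j+1) * (((k+1).choose (j+1) : ℕ) : ℝ) * f (j+1))
      = (((-1:ℝ)^j * (k.choose j : ℝ) * f j)
          - ((-1:ℝ)^(j+1) * (k.choose (j+1) : ℝ) * f (j+1))) := by
    intro j _
    rw [Nat.choose_succ_succ]
    push_cast
    ring
  have tele : ∑ j ∈ range (k+1),
      (((-1:ℝ)^j * (k.choose j : ℝ) * f j) - ((-1:ℝ)^(j+1) * (k.choose (j+1) : ℝ) * f (j+1)))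
      = f 0 := by
    rw [Finset.sum_range_sub' (fun j => (-1:ℝ)^j * (k.choose j : ℝ) * f j) (k+1)]
    simp [Nat.choose_succ_self]
  have h1 : - alt k (fun j => f (j+1) - f j)
      - (∑ j ∈ range (k+1), (-1:ℝ)^(j+1) * (((k+1).choose (j+1) : ℕ) : ℝ) * f (j+1)) = f 0 := by
    unfold alt
    rw [← Finset.sum_neg_distrib, ← Finset.sum_sub_distrib]
    rw [Finset.sum_congr rfl key]
    exact tele
  unfold alt at h1 ⊢
  rw [Finset.sum_range_succ']
  simp only [pow_zero, Nat.choose_zero_right, Nat.cast_one, one_mul, mul_one]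
  linarith [h1]

lemma natDegree_delta_lt (p : Polynomial ℝ) (hp : 1 ≤ p.natDegree) :
    (p.comp (X + C 1) - p).natDegree < p.natDegree := by
  have hp0 : p ≠ 0 := fun h => by simp [h] at hp
  have hq : (X + C (1:ℝ)).natDegree = 1 := natDegree_X_add_C 1
  have hcompdeg : (p.comp (X + C 1)).natDegree = p.natDegree := by
    rw [natDegree_comp, hq, mul_one]
  have hcomp0 : p.comp (X + C 1) ≠ 0 := by
    intro h
    rw [h, natDegree_zero] at hcompdeg
    omega
  have hlc : (p.comp (X + C 1)).leadingCoeff = p.leadingCoeff := by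
    rw [leadingCoeff_comp (by rw [hq]; exact one_ne_zero),
      (monic_X_add_C (1:ℝ)).leadingCoeff, one_pow, mul_one]
  have hdeg : (p.comp (X + C 1) - p).degree < (p.comp (X + C 1)).degree := by
    apply degree_sub_lt _ hcomp0 hlc
    rw [degree_eq_natDegree hcomp0, degree_eq_natDegree hp0, hcompdeg]
  have hdegeq : (p.comp (X + C 1)).degree = p.degree := by
    rw [degree_eq_natDegree hcomp0, degree_eq_natDegree hp0, hcompdeg]
  rw [hdegeq] at hdeg
  by_cases h0 : p.comp (X + C 1) - p = 0
  · rw [h0, natDegree_zero]; omega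
  · exact Polynomial.natDegree_lt_natDegree h0 hdeg

lemma alt_eval_eq_zero : ∀ (k : ℕ) (p : Polynomial ℝ), p.natDegree < k →
    alt k (fun j => p.eval (j:ℝ)) = 0 := by
  intro k
  induction k with
  | zero => intro p h; omega
  | succ k ih =>
    intro p hp
    rw [alt_step]
    rcases Nat.eq_zero_or_pos p.natDegree with h0 | h1
    · obtain ⟨a, rfl⟩ := Polynomial.natDegree_eq_zero.mp h0
      have hz : (fun j : ℕ => (C a).eval ((j+1 : ℕ):ℝ) - (C a).eval ((j:ℕ):ℝ)) = fun _ : ℕ => (0:ℝ) := by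
        funext j; simp
      rw [show (fun j : ℕ => (C a).eval (((j:ℕ)+1 : ℕ):ℝ) - (C a).eval ((j:ℕ):ℝ)) = fun _ : ℕ => (0:ℝ) from hz]
      simp [alt]
    · have hd := natDegree_delta_lt p h1
      have hfun : (fun j : ℕ => p.eval (((j:ℕ)+1 : ℕ):ℝ) - p.eval ((j:ℕ):ℝ))
          = fun j : ℕ => (p.comp (X + C 1) - p).eval ((j:ℕ):ℝ) := by
        funext j
        simp [eval_comp]
      rw [hfun, ih _ (by omega)]
      simp

noncomputable def Bk (m n k : ℕ) : ℝ :=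
  ∑ j ∈ range (k+1), (-1:ℝ)^(k-j) * (k.choose j : ℝ) * ((m:ℝ) * j + 1)^n

lemma neg_one_pow_sub (k j : ℕ) (h : j ≤ k) : (-1:ℝ)^(k-j) = (-1)^k * (-1)^j := by
  have : (-1:ℝ)^k * (-1)^j = (-1)^(k+j) := (pow_add _ _ _).symm
  rw [this, show k + j = (k-j) + 2*j by omega, pow_add, pow_mul]
  simp

lemma Bk_eq (m n k : ℕ) : Bk m n k = (-1:ℝ)^k * alt k (fun j => ((m:ℝ)*j+1)^n) := by
  unfold Bk alt
  rw [Finset.mul_sum]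
  apply Finset.sum_congr rfl
  intro j hj
  rw [neg_one_pow_sub k j (by simpa [Nat.lt_succ_iff] using hj)]
  ring

lemma Bk_eq_zero (m n k : ℕ) (h : n < k) : Bk m n k = 0 := by
  rw [Bk_eq]
  have hf : (fun j : ℕ => ((m:ℝ)*j + 1)^n) = fun j : ℕ => ((C (m:ℝ) * X + C 1)^n).eval (j:ℝ) := by
    funext j; simp
  rw [hf, alt_eval_eq_zero k _ ?_, mul_zero]
  calc ((C (m:ℝ) * X + C 1)^n).natDegree ≤ n * (C (m:ℝ) * X + C 1).natDegree :=
        natDegree_pow_le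
    _ ≤ n * 1 := by
        apply Nat.mul_le_mul_left
        apply le_trans (natDegree_add_le _ _)
        apply max_le
        · exact le_trans (natDegree_C_mul_le _ _) (by simp)
        · simp
    _ < k := by omega

lemma inv_sum (f : ℕ → ℝ) (i : ℕ) :
    ∑ k ∈ range (i+1), (i.choose k : ℝ) * ((-1:ℝ)^k * alt k f) = f i := by
  unfold alt
  have expand : ∀ k ∈ range (i+1),
      (i.choose k : ℝ) * ((-1:ℝ)^k * ∑ j ∈ range (k+1), (-1:ℝ)^j * (k.choose j : ℝ) * f j)
      = ∑ j ∈ range (i+1), (-1:ℝ)^(k+j) * (i.choose k : ℝ) * (k.choose j : ℝ) * f j := by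
    intro k hk
    have hki : k ≤ i := by simpa [Nat.lt_succ_iff] using hk
    rw [Finset.mul_sum, Finset.mul_sum]
    rw [← Finset.sum_subset (Finset.range_subset_range.2 (by omega : k+1 ≤ i+1))]
    · exact Finset.sum_congr rfl fun j _ => by rw [pow_add]; ring
    · intro j _ hj
      have : k < j := by simpa [Nat.lt_succ_iff, not_le] using hj
      simp [Nat.choose_eq_zero_of_lt this]
  rw [Finset.sum_congr rfl expand, Finset.sum_comm]
  have inner : ∀ j ∈ range (i+1),
      ∑ k ∈ range (i+1), (-1:ℝ)^(k+j) * (i.choose k : ℝ) * (k.choose j : ℝ) * f j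
        = (if j = i then f i else 0) := by
    intro j hj
    have hji : j ≤ i := by simpa [Nat.lt_succ_iff] using hj
    have split : ∑ k ∈ range (i+1), (-1:ℝ)^(k+j) * (i.choose k : ℝ) * (k.choose j : ℝ) * f j
        = ∑ k ∈ Finset.Ico j (i+1), (-1:ℝ)^(k+j) * (i.choose k : ℝ) * (k.choose j : ℝ) * f j := by
      rw [Finset.range_eq_Ico, ← Finset.sum_Ico_consecutive _ (by omega : 0 ≤ j) (by omega : j ≤ i+1)]
      have : ∑ k ∈ Finset.Ico 0 j, (-1:ℝ)^(k+j) * (i.choose k : ℝ) * (k.choose j : ℝ) * f j = 0 := by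
        apply Finset.sum_eq_zero
        intro k hk
        have : k < j := (Finset.mem_Ico.mp hk).2
        simp [Nat.choose_eq_zero_of_lt this]
      rw [this, zero_add]
    rw [split, Finset.sum_Ico_eq_sum_range]
    have hterm : ∀ s ∈ range (i+1-j),
        (-1:ℝ)^(j+s+j) * (i.choose (j+s) : ℝ) * ((j+s).choose j : ℝ) * f j
        = (i.choose j : ℝ) * f j * ((-1:ℝ)^s * ((i-j).choose s : ℝ)) := by
      intro s hs
      have hsi : j + s ≤ i := by
        have := Finset.mem_range.mp hs; omega
      have hc := Nat.choose_mul (n := i) (show j ≤ j + s by omega)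
      have hc' : ((i.choose (j+s)) : ℝ) * ((j+s).choose j : ℝ) = (i.choose j : ℝ) * ((i-j).choose (s) : ℝ) := by
        rw [show (j+s) - j = s by omega] at hc
        exact_mod_cast congrArg (Nat.cast : ℕ → ℝ) hc
      have hsign : (-1:ℝ)^(j+s+j) = (-1:ℝ)^s := by
        rw [show j+s+j = s + 2*j by omega, pow_add, pow_mul]; simp
      calc (-1:ℝ)^(j+s+j) * (i.choose (j+s) : ℝ) * ((j+s).choose j : ℝ) * f j
          = (-1:ℝ)^s * ((i.choose (j+s) : ℝ) * ((j+s).choose j : ℝ)) * f j := by rw [hsign]; ring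
        _ = (i.choose j : ℝ) * f j * ((-1:ℝ)^s * ((i-j).choose s : ℝ)) := by rw [hc']; ring
    rw [Finset.sum_congr rfl hterm, ← Finset.mul_sum]
    have halt : ∑ s ∈ range (i+1-j), ((-1:ℝ)^s * ((i-j).choose s : ℝ)) = if i - j = 0 then 1 else 0 := by
      have := @Int.alternating_sum_range_choose (i-j)
      rw [show i+1-j = (i-j)+1 by omega]
      have hcast := congrArg (Int.cast : ℤ → ℝ) this
      push_cast at hcast
      rw [← hcast]
    rw [halt]
    by_cases hij : j = i
    · subst hij; simp
    · rw [if_neg (show ¬ i - j = 0 by omega), if_neg hij, mul_zero]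
  rw [Finset.sum_congr rfl inner, Finset.sum_ite_eq' (range (i+1)) i (fun _ => f i)]
  simp


lemma summ_choose (m : ℕ) (x : ℝ) (k : ℕ) :
    Summable (fun i : ℕ => ww m x i * (i.choose k : ℝ)) := by
  rw [← summable_abs_iff]
  apply Summable.of_nonneg_of_le (fun i => abs_nonneg _) _
    (Real.summable_pow_div_factorial (2 * |x / m|))
  intro i
  have h1 : |ww m x i * (i.choose k:ℝ)| = |x/m|^i / i.factorial * (i.choose k : ℝ) := by
    unfold ww
    rw [abs_mul, abs_div, abs_pow]
    simp [Nat.abs_cast]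
  rw [h1]
  have hch : ((i.choose k : ℕ):ℝ) ≤ (2:ℝ)^i := by
    calc ((i.choose k : ℕ):ℝ) ≤ ((2^i : ℕ):ℝ) := by exact_mod_cast choose_le_two_pow' i k
      _ = (2:ℝ)^i := by push_cast; ring
  have h3 : (0:ℝ) ≤ |x/m|^i / i.factorial := by positivity
  calc |x/m|^i / i.factorial * (i.choose k : ℝ) ≤ |x/m|^i / i.factorial * (2:ℝ)^i :=
      mul_le_mul_of_nonneg_left hch h3
    _ = (2 * |x/m|)^i / i.factorial := by rw [mul_pow]; ring

lemma choose_tsum (m : ℕ) (x : ℝ) (k : ℕ) :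
    ∑' i : ℕ, ww m x i * (i.choose k : ℝ) = (x/m)^k / k.factorial * ∑' i : ℕ, ww m x i := by
  have hs := summ_choose m x k
  rw [← Summable.sum_add_tsum_nat_add k hs]
  have h0 : ∑ i ∈ range k, ww m x i * (i.choose k : ℝ) = 0 :=
    Finset.sum_eq_zero fun i hi => by
      simp [Nat.choose_eq_zero_of_lt (Finset.mem_range.mp hi)]
  rw [h0, zero_add, ← tsum_mul_left]
  apply tsum_congr
  intro i
  have hC : (((i+k).choose k : ℕ):ℝ) * (k.factorial:ℝ) * (i.factorial:ℝ) = ((i+k).factorial : ℝ) := by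
    have := Nat.choose_mul_factorial_mul_factorial (show k ≤ i + k by omega)
    rw [show i + k - k = i by omega] at this
    exact_mod_cast this
  have hk : ((k.factorial:ℝ)) ≠ 0 := by exact_mod_cast (Nat.factorial_pos k).ne'
  have hi : ((i.factorial:ℝ)) ≠ 0 := by exact_mod_cast (Nat.factorial_pos i).ne'
  have hik : (((i+k).factorial:ℝ)) ≠ 0 := by exact_mod_cast (Nat.factorial_pos (i+k)).ne'
  unfold ww
  set r := x / (m:ℝ) with hr
  rw [pow_add]
  field_simp
  linear_combination (r^i * r^k) * hC

lemma moment (m : ℕ) (x : ℝ) (hm : 0 < m) (n : ℕ) :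
    ∑' i : ℕ, ww m x i * (1 + (m:ℝ)*i)^n = (∑' i : ℕ, ww m x i) * dowling m n x := by
  have hM : (m:ℝ) ≠ 0 := Nat.cast_ne_zero.2 hm.ne'
  have hpt : ∀ i : ℕ, (1 + (m:ℝ)*i)^n = ∑ k ∈ range (n+1), (i.choose k : ℝ) * Bk m n k := by
    intro i
    have base := inv_sum (fun j => ((m:ℝ)*j+1)^n) i
    rw [Finset.sum_congr rfl (fun k _ => by rw [← Bk_eq m n k] :
      ∀ k ∈ range (i+1), (i.choose k:ℝ) * ((-1:ℝ)^k * alt k (fun j => ((m:ℝ)*j+1)^n))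
        = (i.choose k:ℝ) * Bk m n k)] at base
    have e1 : ∑ k ∈ range (i+1), (i.choose k:ℝ) * Bk m n k
        = ∑ k ∈ range (max i n + 1), (i.choose k:ℝ) * Bk m n k := by
      apply Finset.sum_subset (Finset.range_subset_range.2 (by omega))
      intro k _ hk
      have hik : i < k := by
        simp only [Finset.mem_range, not_lt] at hk
        omega
      simp [Nat.choose_eq_zero_of_lt hik]
    have e2 : ∑ k ∈ range (n+1), (i.choose k:ℝ) * Bk m n k
        = ∑ k ∈ range (max i n + 1), (i.choose k:ℝ) * Bk m n k := by
      apply Finset.sum_subset (Finset.range_subset_range.2 (by omega))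
      intro k _ hk
      have hnk : n < k := by
        simp only [Finset.mem_range, not_lt] at hk
        omega
      simp [Bk_eq_zero m n k hnk]
    rw [e2, ← e1, base]
    ring
  calc ∑' i : ℕ, ww m x i * (1 + (m:ℝ)*i)^n
      = ∑' i : ℕ, ∑ k ∈ range (n+1), Bk m n k * (ww m x i * (i.choose k : ℝ)) := by
        apply tsum_congr
        intro i
        rw [hpt i, Finset.mul_sum]
        exact Finset.sum_congr rfl fun k _ => by ring
    _ = ∑ k ∈ range (n+1), Bk m n k * ∑' i : ℕ, (ww m x i * (i.choose k : ℝ)) := by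
        rw [Summable.tsum_finsetSum (fun k _ => ((summ_choose m x k).mul_left _))]
        exact Finset.sum_congr rfl fun k _ => tsum_mul_left
    _ = (∑' i : ℕ, ww m x i) * dowling m n x := by
        rw [dowling, Finset.mul_sum]
        apply Finset.sum_congr rfl
        intro k _
        rw [choose_tsum m x k]
        have hw : whitney2 m n k = 1/((m:ℝ)^k * k.factorial) * Bk m n k := rfl
        rw [hw, div_pow x (m:ℝ) k]
        have hk : ((k.factorial:ℝ)) ≠ 0 := by exact_mod_cast (Nat.factorial_pos k).ne'
        have hmk : ((m:ℝ))^k ≠ 0 := pow_ne_zero _ hM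
        field_simp


end DowlingAux

/-- The Dowling polynomials `D_m(n,x)` are the moments of the orthogonal family `P_n`. -/
theorem dowling_moments (m : ℕ) (hm : 0 < m) (x : ℝ)
    (L : Polynomial ℝ →ₗ[ℝ] ℝ)
    (hL : ∀ n : ℕ, L (Polynomial.X ^ n) = dowling m n x) :
    ∀ i j : ℕ, i ≠ j → L (dowlingOP m x i * dowlingOP m x j) = 0 := by
  classical
  intro i j hij
  have heC : (0:ℝ) < ∑' k : ℕ, DowlingAux.ww m x k := by
    have h1 := congrFun (NormedSpace.exp_eq_tsum_div (𝔸 := ℝ)) (x / m)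
    have h2 := congrFun Real.exp_eq_exp_ℝ (x / m)
    have h3 : ∑' k : ℕ, DowlingAux.ww m x k = Real.exp (x / m) := by
      rw [h2, h1]
      exact tsum_congr fun n => rfl
    rw [h3]
    exact Real.exp_pos _
  have hrel : ∀ p : Polynomial ℝ,
      ∑' k : ℕ, DowlingAux.ww m x k * p.eval (1 + (m:ℝ) * k)
        = (∑' k : ℕ, DowlingAux.ww m x k) * L p := by
    intro p
    induction p using Polynomial.induction_on' with
    | add p q hp hq =>
        have hsplit : ∀ k : ℕ, DowlingAux.ww m x k * (p+q).eval (1+(m:ℝ)*k)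
            = DowlingAux.ww m x k * p.eval (1+(m:ℝ)*k)
              + DowlingAux.ww m x k * q.eval (1+(m:ℝ)*k) := by
          intro k; rw [Polynomial.eval_add]; ring
        rw [tsum_congr hsplit, Summable.tsum_add (DowlingAux.summP m x p) (DowlingAux.summP m x q), hp, hq,
          map_add, mul_add]
    | monomial n a =>
        have h1 : ∀ k : ℕ, DowlingAux.ww m x k * (Polynomial.monomial n a).eval (1+(m:ℝ)*k)
            = a * (DowlingAux.ww m x k * (1+(m:ℝ)*k)^n) := by
          intro k; rw [Polynomial.eval_monomial]; ring
        rw [tsum_congr h1, tsum_mul_left, DowlingAux.moment m x hm n,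
          ← Polynomial.smul_X_eq_monomial, map_smul, hL n, smul_eq_mul]
        ring
  have horto : ∑' k : ℕ, DowlingAux.ww m x k *
      (dowlingOP m x i * dowlingOP m x j).eval (1+(m:ℝ)*k) = 0 := by
    have h := DowlingAux.Eorth m x hm (i+j) i j le_rfl hij
    rw [← h]
    exact tsum_congr fun k => by rw [Polynomial.eval_mul]
  have hfin := hrel (dowlingOP m x i * dowlingOP m x j)
  rw [horto] at hfin
  rcases mul_eq_zero.mp hfin.symm with h | h
  · exact absurd h heC.ne'
  · exact h
end

section
/- Let m be a positive integer and x a real number. For every n ≥ 0, the Hankel determinant of the Dowling polynomials satisfies det( (D_m(i+j, x))_{0 ≤ i,j ≤ n} ) = (m·x)^{C(n+1,2)} · ∏_{k=0}^n k!, where C(n+1,2) = n(n+1)/2. -/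
namespace DowHankel


/-- inner alternating sum -/
noncomputable def A (s : ℕ) (f : ℕ → ℝ) : ℝ :=
  ∑ i ∈ Finset.range (s+1), (-1:ℝ)^i * (s.choose i) * f i

lemma A_succ (s : ℕ) (f : ℕ → ℝ) :
    A (s+1) f = A s f - A s (fun i => f (i+1)) := by
  have hS2 : ∑ i ∈ Finset.range (s+1), (-1:ℝ)^(i+1) * (s.choose (i+1)) * f (i+1) + f 0
      = A s f := by
    rw [Finset.sum_range_succ]
    simp only [Nat.choose_succ_self, Nat.cast_zero, mul_zero, zero_mul, mul_zero, add_zero]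
    unfold A
    rw [Finset.sum_range_succ' (fun i => (-1:ℝ)^i * ((s).choose i) * f i) s]
    simp
  unfold A
  rw [Finset.sum_range_succ' (fun i => (-1:ℝ)^i * ((s+1).choose i) * f i) (s+1)]
  have key : ∀ i ∈ Finset.range (s+1), (-1:ℝ)^(i+1) * (((s+1).choose (i+1) : ℕ) : ℝ) * f (i+1)
      = -((-1)^i * (s.choose i) * f (i+1)) + (-1)^(i+1) * (s.choose (i+1)) * f (i+1) := by
    intro i _
    rw [Nat.choose_succ_succ']
    push_cast
    ring
  rw [Finset.sum_congr rfl key, Finset.sum_add_distrib, Finset.sum_neg_distrib]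
  simp only [Nat.choose_zero_right, Nat.cast_one, pow_zero, one_mul, mul_one]
  unfold A at hS2
  linarith [hS2]


lemma A_sum (s : ℕ) (T : Finset ℕ) (g : ℕ → ℕ → ℝ) :
    A s (fun i => ∑ v ∈ T, g v i) = ∑ v ∈ T, A s (g v) := by
  unfold A
  rw [Finset.sum_comm]
  apply Finset.sum_congr rfl
  intro i _
  rw [Finset.mul_sum]

lemma pow_succ_expand (m : ℕ) (n : ℕ) (i : ℕ) :
    ((m:ℝ) * (i+1) + 1)^n = ∑ v ∈ Finset.range (n+1), ((m:ℝ)*i+1)^v * (m:ℝ)^(n-v) * (n.choose v) := by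
  rw [show ((m:ℝ) * (i+1) + 1) = ((m:ℝ)*i+1) + (m:ℝ) by ring, add_pow]

/-- the difference operator of order `s` kills `(m i + 1)^n` for `s > n`. -/
lemma A_pow_zero (m : ℕ) : ∀ n s : ℕ, n < s → A s (fun i => ((m:ℝ)*i+1)^n) = 0 := by
  intro n
  induction n using Nat.strong_induction_on with
  | _ n ih =>
    intro s hns
    obtain ⟨t, rfl⟩ : ∃ t, s = t + 1 := ⟨s-1, by omega⟩
    rw [A_succ]
    have h2 : A t (fun i => ((m:ℝ)*(i+1)+1)^n)
        = ∑ v ∈ Finset.range (n+1), A t (fun i => ((m:ℝ)*i+1)^v * ((m:ℝ)^(n-v) * (n.choose v))) := by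
      rw [← A_sum]
      apply congrArg
      funext i
      rw [pow_succ_expand m n i]
      apply Finset.sum_congr rfl
      intro v _
      ring
    have h3 : ∀ s' g (c : ℝ), A s' (fun i => g i * c) = A s' g * c := by
      intro s' g c
      unfold A
      rw [Finset.sum_mul]
      apply Finset.sum_congr rfl
      intro i _
      ring
    push_cast
    rw [h2, Finset.sum_range_succ]
    simp only [h3]
    have h4 : ∀ v ∈ Finset.range n, A t (fun i => ((m:ℝ)*i+1)^v) * ((m:ℝ)^(n-v) * (n.choose v)) = 0 := by
      intro v hv
      have hvn : v < n := Finset.mem_range.mp hv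
      rw [ih v hvn t (by omega), zero_mul]
    rw [Finset.sum_congr rfl h4, Finset.sum_const, smul_zero, zero_add]
    simp

/-- the difference operator of order `n` on `(m i + 1)^n` gives `(-1)^n m^n n!`. -/
lemma A_pow_top (m : ℕ) : ∀ n : ℕ, A n (fun i => ((m:ℝ)*i+1)^n) = (-1:ℝ)^n * (m:ℝ)^n * (n.factorial) := by
  intro n
  induction n with
  | zero => simp [A]
  | succ n ih =>
    rw [A_succ]
    have h3 : ∀ s' g (c : ℝ), A s' (fun i => g i * c) = A s' g * c := by
      intro s' g c
      unfold A
      rw [Finset.sum_mul]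
      apply Finset.sum_congr rfl
      intro i _
      ring
    have h2 : A n (fun i => ((m:ℝ)*(i+1)+1)^(n+1))
        = ∑ v ∈ Finset.range (n+2), A n (fun i => ((m:ℝ)*i+1)^v) * ((m:ℝ)^(n+1-v) * ((n+1).choose v)) := by
      rw [← Finset.sum_congr rfl (fun v _ => h3 n _ _), ← A_sum]
      apply congrArg
      funext i
      rw [pow_succ_expand m (n+1) i]
      apply Finset.sum_congr rfl
      intro v _
      ring
    push_cast
    rw [h2, Finset.sum_range_succ, Finset.sum_range_succ]
    have h4 : ∀ v ∈ Finset.range n, A n (fun i => ((m:ℝ)*i+1)^v) * ((m:ℝ)^(n+1-v) * ((n+1).choose v)) = 0 := by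
      intro v hv
      rw [A_pow_zero m v n (Finset.mem_range.mp hv), zero_mul]
    rw [Finset.sum_congr rfl h4, Finset.sum_const, smul_zero, zero_add]
    have e1 : n + 1 - n = 1 := by omega
    have e2 : n + 1 - (n + 1) = 0 := by omega
    rw [e1, e2, Nat.choose_succ_self_right, Nat.choose_self, pow_zero, pow_one, ih]
    push_cast [Nat.factorial_succ]
    ring


lemma whitney2_eq_A (m n k : ℕ) :
    whitney2 m n k = (1 / ((m:ℝ)^k * k.factorial)) * ((-1:ℝ)^k * A k (fun i => ((m:ℝ)*i+1)^n)) := by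
  unfold whitney2 A
  congr 1
  rw [Finset.mul_sum]
  apply Finset.sum_congr rfl
  intro i hi
  have hik : i ≤ k := by
    have := Finset.mem_range.mp hi; omega
  have hpow : (-1:ℝ)^(k-i) * (-1:ℝ)^i = (-1:ℝ)^k := by
    rw [← pow_add]
    congr 1
    omega
  have h : (-1:ℝ)^(k-i) = (-1:ℝ)^k * (-1:ℝ)^i := by
    have hii : (-1:ℝ)^i * (-1:ℝ)^i = 1 := by
      rw [← pow_add]; exact Even.neg_one_pow ⟨i, rfl⟩
    calc (-1:ℝ)^(k-i) = (-1:ℝ)^(k-i) * ((-1:ℝ)^i * (-1:ℝ)^i) := by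
          rw [hii, mul_one]
      _ = ((-1:ℝ)^(k-i) * (-1:ℝ)^i) * (-1:ℝ)^i := by ring
      _ = (-1:ℝ)^k * (-1:ℝ)^i := by rw [hpow]
  rw [h]
  ring

lemma coeff_eq (m n k : ℕ) (hm : m ≠ 0) :
    (m:ℝ)^k * (k.factorial : ℝ) * whitney2 m n k = (-1:ℝ)^k * A k (fun i => ((m:ℝ)*i+1)^n) := by
  rw [whitney2_eq_A]
  have h1 : ((m:ℝ)^k * (k.factorial : ℝ)) ≠ 0 :=
    mul_ne_zero (pow_ne_zero _ (Nat.cast_ne_zero.mpr hm)) (Nat.cast_ne_zero.mpr k.factorial_ne_zero)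
  field_simp

lemma whitney2_vanish (m n k : ℕ) (h : n < k) : whitney2 m n k = 0 := by
  rw [whitney2_eq_A, A_pow_zero m n k h]
  ring

lemma whitney2_diag (m n : ℕ) (hm : m ≠ 0) : whitney2 m n n = 1 := by
  rw [whitney2_eq_A, A_pow_top m n]
  have h1 : ((m:ℝ)^n * (n.factorial : ℝ)) ≠ 0 :=
    mul_ne_zero (pow_ne_zero _ (Nat.cast_ne_zero.mpr hm)) (Nat.cast_ne_zero.mpr n.factorial_ne_zero)
  have h2 : ((-1:ℝ)^n * (-1:ℝ)^n) = 1 := by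
    rw [← pow_add]
    exact Even.neg_one_pow ⟨n, by omega⟩
  have h3 : (1:ℝ) / ((m:ℝ)^n * (n.factorial:ℝ)) * ((-1:ℝ)^n * ((-1:ℝ)^n * (m:ℝ)^n * (n.factorial:ℝ)))
      = ((-1:ℝ)^n * (-1:ℝ)^n) * ((1:ℝ)/((m:ℝ)^n * (n.factorial:ℝ)) * ((m:ℝ)^n * (n.factorial:ℝ))) := by
    ring
  rw [h3, h2, one_mul, one_div_mul_cancel h1]


lemma borth (c u : ℕ) :
    ∑ k ∈ Finset.range (c+1), (-1:ℝ)^k * (c.choose k) * (k.choose u)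
      = if u = c then (-1:ℝ)^c else 0 := by
  by_cases hu : u ≤ c
  · have hsplit : Finset.range (c+1) = Finset.Ico 0 (c+1) := by rw [Finset.range_eq_Ico]
    rw [hsplit, ← Finset.sum_Ico_consecutive _ (Nat.zero_le u) (by omega : u ≤ c+1)]
    have hfirst : ∑ k ∈ Finset.Ico 0 u, (-1:ℝ)^k * (c.choose k) * (k.choose u) = 0 := by
      apply Finset.sum_eq_zero
      intro k hk
      have : k < u := (Finset.mem_Ico.mp hk).2
      rw [Nat.choose_eq_zero_of_lt this]
      simp
    rw [hfirst, zero_add, Finset.sum_Ico_eq_sum_range]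
    have hterm : ∀ w ∈ Finset.range (c+1-u),
        (-1:ℝ)^(u+w) * (c.choose (u+w)) * ((u+w).choose u)
          = ((-1:ℝ)^u * (c.choose u)) * ((-1:ℝ)^w * ((c-u).choose w)) := by
      intro w hw
      have hw' : w < c+1-u := Finset.mem_range.mp hw
      have hkn : u + w ≤ c := by omega
      have hsk : u ≤ u + w := by omega
      have hmul := Nat.choose_mul (n := c) hsk
      have hsub : u + w - u = w := by omega
      rw [hsub] at hmul
      have hcast : ((c.choose (u+w) : ℝ)) * ((u+w).choose u)
          = (c.choose u : ℝ) * ((c-u).choose w) := by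
        exact_mod_cast congrArg (Nat.cast : ℕ → ℝ) hmul
      calc (-1:ℝ)^(u+w) * (c.choose (u+w)) * ((u+w).choose u)
          = (-1:ℝ)^(u+w) * ((c.choose (u+w) : ℝ) * ((u+w).choose u)) := by ring
        _ = (-1:ℝ)^(u+w) * ((c.choose u : ℝ) * ((c-u).choose w)) := by rw [hcast]
        _ = ((-1:ℝ)^u * (c.choose u)) * ((-1:ℝ)^w * ((c-u).choose w)) := by
            rw [pow_add]; ring
    rw [Finset.sum_congr rfl hterm, ← Finset.mul_sum]
    have hrange : c + 1 - u = (c-u) + 1 := by omega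
    have halt : ∑ w ∈ Finset.range ((c-u)+1), (-1:ℝ)^w * ((c-u).choose w)
        = if c - u = 0 then 1 else 0 := by
      have := @Int.alternating_sum_range_choose (c-u)
      have hcast := congrArg (Int.cast : ℤ → ℝ) this
      push_cast at hcast
      convert hcast using 2
    rw [hrange, halt]
    by_cases huc : u = c
    · subst huc
      simp
    · rw [if_neg (by omega), if_neg huc, mul_zero]
  · rw [if_neg (by omega)]
    apply Finset.sum_eq_zero
    intro k hk
    have hk' : k < u := by
      have := Finset.mem_range.mp hk; omega
    rw [Nat.choose_eq_zero_of_lt hk']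
    simp

lemma A_extend (k c : ℕ) (hkc : k ≤ c) (f : ℕ → ℝ) :
    A k f = ∑ i ∈ Finset.range (c+1), (-1:ℝ)^i * (k.choose i) * f i := by
  unfold A
  apply Finset.sum_subset (Finset.range_subset_range.mpr (by omega))
  intro i _ hi
  have hki : k < i := by
    simp only [Finset.mem_range] at hi; omega
  rw [Nat.choose_eq_zero_of_lt hki]
  simp

lemma newton (f : ℕ → ℝ) (c : ℕ) :
    ∑ k ∈ Finset.range (c+1), (c.choose k : ℝ) * ((-1:ℝ)^k * A k f) = f c := by
  have h1 : ∀ k ∈ Finset.range (c+1), (c.choose k : ℝ) * ((-1:ℝ)^k * A k f)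
      = ∑ i ∈ Finset.range (c+1), ((-1:ℝ)^i * f i) * ((-1:ℝ)^k * (c.choose k) * (k.choose i)) := by
    intro k hk
    have hkc : k ≤ c := by
      have := Finset.mem_range.mp hk; omega
    rw [A_extend k c hkc f, Finset.mul_sum, Finset.mul_sum]
    apply Finset.sum_congr rfl
    intro i _
    ring
  rw [Finset.sum_congr rfl h1, Finset.sum_comm]
  have h2 : ∀ i ∈ Finset.range (c+1),
      ∑ k ∈ Finset.range (c+1), ((-1:ℝ)^i * f i) * ((-1:ℝ)^k * (c.choose k) * (k.choose i))
        = if i = c then ((-1:ℝ)^i * f i) * (-1:ℝ)^c else 0 := by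
    intro i _
    rw [← Finset.mul_sum, borth c i]
    simp only [mul_ite, mul_zero]
  rw [Finset.sum_congr rfl h2, Finset.sum_ite_eq' (Finset.range (c+1)) c
    (fun i => ((-1:ℝ)^i * f i) * (-1:ℝ)^c)]
  rw [if_pos (Finset.self_mem_range_succ c)]
  have h3 : ((-1:ℝ)^c) * ((-1:ℝ)^c) = 1 := by
    rw [← pow_add]; exact Even.neg_one_pow ⟨c, rfl⟩
  calc (-1:ℝ)^c * f c * (-1:ℝ)^c = ((-1:ℝ)^c * (-1:ℝ)^c) * f c := by ring
    _ = f c := by rw [h3, one_mul]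

lemma K1 (m : ℕ) (hm : m ≠ 0) (N c : ℕ) :
    ((m:ℝ)*c+1)^N
      = ∑ k ∈ Finset.range (N+1), ((m:ℝ)^k * k.factorial * whitney2 m N k) * (c.choose k) := by
  have h0 := newton (fun i => ((m:ℝ)*i+1)^N) c
  have hx1 : ∑ k ∈ Finset.range (N+c+1), (c.choose k:ℝ) * ((-1:ℝ)^k * A k (fun i => ((m:ℝ)*i+1)^N))
      = ((m:ℝ)*c+1)^N := by
    rw [← h0]
    symm
    apply Finset.sum_subset (Finset.range_subset_range.mpr (by omega))
    intro k _ hk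
    have hck : c < k := by
      simp only [Finset.mem_range] at hk; omega
    rw [Nat.choose_eq_zero_of_lt hck]
    simp
  have hx2 : ∑ k ∈ Finset.range (N+1), (c.choose k:ℝ) * ((-1:ℝ)^k * A k (fun i => ((m:ℝ)*i+1)^N))
      = ((m:ℝ)*c+1)^N := by
    rw [← hx1]
    apply Finset.sum_subset (Finset.range_subset_range.mpr (by omega))
    intro k _ hk
    have hNk : N < k := by
      simp only [Finset.mem_range] at hk; omega
    rw [A_pow_zero m N k hNk]
    simp
  rw [← hx2]
  apply Finset.sum_congr rfl
  intro k _
  rw [coeff_eq m N k hm]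
  ring


lemma exp_tsum (a : ℝ) : ∑' n : ℕ, a^n/(n.factorial:ℝ) = Real.exp a := by
  rw [Real.exp_eq_exp_ℝ, NormedSpace.exp_eq_tsum_div]

lemma shift_term (a : ℝ) (u d : ℕ) :
    a^(d+u)/(((d+u).factorial:ℕ):ℝ) * (((d+u).choose u : ℕ):ℝ)
      = (a^u/(u.factorial:ℝ)) * (a^d/(d.factorial:ℝ)) := by
  have hfac : (((d+u).choose u : ℕ):ℝ) * (u.factorial:ℝ) * (d.factorial:ℝ)
      = (((d+u).factorial:ℕ):ℝ) := by
    have h := Nat.choose_mul_factorial_mul_factorial (Nat.le_add_left u d)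
    have h2 : d + u - u = d := by omega
    rw [h2] at h
    exact_mod_cast congrArg (Nat.cast : ℕ → ℝ) h
  have h1 : ((((d+u).factorial:ℕ)):ℝ) ≠ 0 := Nat.cast_ne_zero.mpr (Nat.factorial_ne_zero _)
  have h2 : ((u.factorial:ℕ):ℝ) ≠ 0 := Nat.cast_ne_zero.mpr (Nat.factorial_ne_zero _)
  have h3 : ((d.factorial:ℕ):ℝ) ≠ 0 := Nat.cast_ne_zero.mpr (Nat.factorial_ne_zero _)
  field_simp
  rw [pow_add]
  linear_combination (a^d * a^u) * hfac

lemma summable_choose (a : ℝ) (u : ℕ) :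
    Summable (fun c : ℕ => a^c/(c.factorial:ℝ) * ((c.choose u : ℕ):ℝ)) := by
  rw [← summable_nat_add_iff u]
  have h : (fun d : ℕ => a^(d+u)/(((d+u).factorial:ℕ):ℝ) * (((d+u).choose u:ℕ):ℝ))
      = fun d => (a^u/(u.factorial:ℝ)) * (a^d/(d.factorial:ℝ)) := funext (shift_term a u)
  rw [h]
  exact (Real.summable_pow_div_factorial a).mul_left _

lemma tsum_choose (a : ℝ) (u : ℕ) :
    ∑' c : ℕ, a^c/(c.factorial:ℝ) * ((c.choose u:ℕ):ℝ) = a^u/(u.factorial:ℝ) * Real.exp a := by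
  rw [← Summable.sum_add_tsum_nat_add u (summable_choose a u)]
  have h0 : ∑ c ∈ Finset.range u, a^c/(c.factorial:ℝ) * ((c.choose u:ℕ):ℝ) = 0 := by
    apply Finset.sum_eq_zero
    intro c hc
    rw [Nat.choose_eq_zero_of_lt (Finset.mem_range.mp hc)]
    simp
  rw [h0, zero_add]
  have h : (fun d : ℕ => a^(d+u)/(((d+u).factorial:ℕ):ℝ) * (((d+u).choose u:ℕ):ℝ))
      = fun d => (a^u/(u.factorial:ℝ)) * (a^d/(d.factorial:ℝ)) := funext (shift_term a u)
  rw [h, tsum_mul_left, exp_tsum]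

lemma vandermonde_real (s d r : ℕ) :
    (((s+d).choose r : ℕ):ℝ) = ∑ l ∈ Finset.range (r+1), ((s.choose l:ℕ):ℝ) * ((d.choose (r-l):ℕ):ℝ) := by
  have h := Nat.add_choose_eq s d r
  rw [Finset.Nat.sum_antidiagonal_eq_sum_range_succ_mk] at h
  exact_mod_cast congrArg (Nat.cast : ℕ → ℝ) h

lemma shift_term2 (a : ℝ) (r s d : ℕ) :
    a^(d+s)/(((d+s).factorial:ℕ):ℝ) * (((d+s).choose r:ℕ):ℝ) * (((d+s).choose s:ℕ):ℝ)
      = ∑ l ∈ Finset.range (r+1),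
          ((a^s/(s.factorial:ℝ)) * ((s.choose l:ℕ):ℝ)) * ((a^d/(d.factorial:ℝ)) * ((d.choose (r-l):ℕ):ℝ)) := by
  have h1 : a^(d+s)/(((d+s).factorial:ℕ):ℝ) * (((d+s).choose s:ℕ):ℝ)
      = (a^s/(s.factorial:ℝ)) * (a^d/(d.factorial:ℝ)) := shift_term a s d
  have h2 : (((d+s).choose r:ℕ):ℝ) = ∑ l ∈ Finset.range (r+1), ((s.choose l:ℕ):ℝ) * ((d.choose (r-l):ℕ):ℝ) := by
    rw [show d + s = s + d by omega]
    exact vandermonde_real s d r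
  calc a^(d+s)/(((d+s).factorial:ℕ):ℝ) * (((d+s).choose r:ℕ):ℝ) * (((d+s).choose s:ℕ):ℝ)
      = (a^(d+s)/(((d+s).factorial:ℕ):ℝ) * (((d+s).choose s:ℕ):ℝ)) * (((d+s).choose r:ℕ):ℝ) := by ring
    _ = ((a^s/(s.factorial:ℝ)) * (a^d/(d.factorial:ℝ)))
          * ∑ l ∈ Finset.range (r+1), ((s.choose l:ℕ):ℝ) * ((d.choose (r-l):ℕ):ℝ) := by rw [h1, h2]
    _ = _ := by
        rw [Finset.mul_sum]
        apply Finset.sum_congr rfl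
        intro l _
        ring

lemma summable_choose2 (a : ℝ) (r s : ℕ) :
    Summable (fun c : ℕ => a^c/(c.factorial:ℝ) * ((c.choose r:ℕ):ℝ) * ((c.choose s:ℕ):ℝ)) := by
  rw [← summable_nat_add_iff s]
  have h : (fun d : ℕ => a^(d+s)/(((d+s).factorial:ℕ):ℝ) * (((d+s).choose r:ℕ):ℝ) * (((d+s).choose s:ℕ):ℝ))
      = fun d => ∑ l ∈ Finset.range (r+1),
          ((a^s/(s.factorial:ℝ)) * ((s.choose l:ℕ):ℝ)) * ((a^d/(d.factorial:ℝ)) * ((d.choose (r-l):ℕ):ℝ)) :=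
    funext (shift_term2 a r s)
  rw [h]
  apply summable_sum
  intro l _
  have : (fun d : ℕ => ((a^s/(s.factorial:ℝ)) * ((s.choose l:ℕ):ℝ)) * ((a^d/(d.factorial:ℝ)) * ((d.choose (r-l):ℕ):ℝ)))
      = fun d => ((a^s/(s.factorial:ℝ)) * ((s.choose l:ℕ):ℝ)) * (a^d/(d.factorial:ℝ) * ((d.choose (r-l):ℕ):ℝ)) := rfl
  exact (summable_choose a (r-l)).mul_left _

lemma tsum_choose2 (a : ℝ) (r s : ℕ) :
    ∑' c : ℕ, a^c/(c.factorial:ℝ) * ((c.choose r:ℕ):ℝ) * ((c.choose s:ℕ):ℝ)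
      = (∑ l ∈ Finset.range (r+1), a^(r-l)/(((r-l).factorial:ℕ):ℝ) * (((s.choose l:ℕ):ℝ) * a^s/(s.factorial:ℝ))) * Real.exp a := by
  rw [← Summable.sum_add_tsum_nat_add s (summable_choose2 a r s)]
  have h0 : ∑ c ∈ Finset.range s, a^c/(c.factorial:ℝ) * ((c.choose r:ℕ):ℝ) * ((c.choose s:ℕ):ℝ) = 0 := by
    apply Finset.sum_eq_zero
    intro c hc
    rw [Nat.choose_eq_zero_of_lt (Finset.mem_range.mp hc)]
    simp
  rw [h0, zero_add]
  have h : (fun d : ℕ => a^(d+s)/(((d+s).factorial:ℕ):ℝ) * (((d+s).choose r:ℕ):ℝ) * (((d+s).choose s:ℕ):ℝ))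
      = fun d => ∑ l ∈ Finset.range (r+1),
          ((a^s/(s.factorial:ℝ)) * ((s.choose l:ℕ):ℝ)) * ((a^d/(d.factorial:ℝ)) * ((d.choose (r-l):ℕ):ℝ)) :=
    funext (shift_term2 a r s)
  rw [h, Summable.tsum_finsetSum]
  · rw [Finset.sum_mul]
    apply Finset.sum_congr rfl
    intro l _
    rw [tsum_mul_left, tsum_choose]
    ring
  · intro l _
    exact (summable_choose a (r-l)).mul_left _


lemma entry (m : ℕ) (hm : m ≠ 0) (x : ℝ) (n i j : ℕ) (hi : i ≤ n) (hj : j ≤ n) :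
    dowling m (i+j) x
      = ∑ r ∈ Finset.range (n+1), ∑ s ∈ Finset.range (n+1),
          ((m:ℝ)^r * r.factorial * whitney2 m i r) * ((m:ℝ)^s * s.factorial * whitney2 m j s)
            * (∑ l ∈ Finset.range (r+1), (x/(m:ℝ))^(r-l)/(((r-l).factorial:ℕ):ℝ)
                * (((s.choose l:ℕ):ℝ) * (x/(m:ℝ))^s/((s.factorial:ℕ):ℝ))) := by
  set a : ℝ := x/(m:ℝ) with ha
  have hm0 : ((m:ℝ)) ≠ 0 := Nat.cast_ne_zero.mpr hm
  have hmx : (m:ℝ) * a = x := by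
    rw [ha]; field_simp
  have stepA : ∑' c : ℕ, a^c/((c.factorial:ℕ):ℝ) * ((m:ℝ)*c+1)^(i+j)
      = (∑ t ∈ Finset.range (i+j+1), whitney2 m (i+j) t * x^t) * Real.exp a := by
    have hpt : ∀ c : ℕ, a^c/((c.factorial:ℕ):ℝ) * ((m:ℝ)*c+1)^(i+j)
        = ∑ t ∈ Finset.range (i+j+1), ((m:ℝ)^t * t.factorial * whitney2 m (i+j) t)
            * (a^c/((c.factorial:ℕ):ℝ) * ((c.choose t:ℕ):ℝ)) := by
      intro c
      rw [K1 m hm (i+j) c, Finset.mul_sum]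
      apply Finset.sum_congr rfl
      intro t _
      ring
    rw [tsum_congr hpt, Summable.tsum_finsetSum (fun t _ => (summable_choose a t).mul_left _)]
    rw [Finset.sum_mul]
    apply Finset.sum_congr rfl
    intro t _
    rw [tsum_mul_left, tsum_choose]
    have hfac : ((t.factorial:ℕ):ℝ) ≠ 0 := Nat.cast_ne_zero.mpr (Nat.factorial_ne_zero _)
    have hx : (m:ℝ)^t * a^t = x^t := by rw [← mul_pow, hmx]
    rw [← hx]
    field_simp
  have kext : ∀ (N : ℕ), N ≤ n → ∀ c:ℕ, ((m:ℝ)*c+1)^N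
      = ∑ t ∈ Finset.range (n+1), ((m:ℝ)^t * t.factorial * whitney2 m N t) * ((c.choose t:ℕ):ℝ) := by
    intro N hN c
    rw [K1 m hm N c]
    apply Finset.sum_subset (Finset.range_subset_range.mpr (by omega))
    intro t _ ht
    have hNt : N < t := by simp only [Finset.mem_range] at ht; omega
    rw [whitney2_vanish m N t hNt]
    simp
  have stepB : ∑' c : ℕ, a^c/((c.factorial:ℕ):ℝ) * ((m:ℝ)*c+1)^(i+j)
      = (∑ r ∈ Finset.range (n+1), ∑ s ∈ Finset.range (n+1),
          ((m:ℝ)^r * r.factorial * whitney2 m i r) * ((m:ℝ)^s * s.factorial * whitney2 m j s)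
            * (∑ l ∈ Finset.range (r+1), a^(r-l)/(((r-l).factorial:ℕ):ℝ)
                * (((s.choose l:ℕ):ℝ) * a^s/((s.factorial:ℕ):ℝ)))) * Real.exp a := by
    have hpt2 : ∀ c : ℕ, a^c/((c.factorial:ℕ):ℝ) * ((m:ℝ)*c+1)^(i+j)
        = ∑ r ∈ Finset.range (n+1), ∑ s ∈ Finset.range (n+1),
            (((m:ℝ)^r * r.factorial * whitney2 m i r) * ((m:ℝ)^s * s.factorial * whitney2 m j s))
              * (a^c/((c.factorial:ℕ):ℝ) * ((c.choose r:ℕ):ℝ) * ((c.choose s:ℕ):ℝ)) := by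
      intro c
      rw [pow_add, kext i hi c, kext j hj c, Finset.sum_mul_sum, Finset.mul_sum]
      refine Finset.sum_congr rfl fun r _ => ?_
      rw [Finset.mul_sum]
      exact Finset.sum_congr rfl fun s _ => by ring
    rw [tsum_congr hpt2,
        Summable.tsum_finsetSum (fun r _ => summable_sum (fun s _ => (summable_choose2 a r s).mul_left _))]
    rw [Finset.sum_mul]
    refine Finset.sum_congr rfl fun r _ => ?_
    rw [Summable.tsum_finsetSum (fun s _ => (summable_choose2 a r s).mul_left _), Finset.sum_mul]
    refine Finset.sum_congr rfl fun s _ => ?_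
    rw [tsum_mul_left, tsum_choose2]
    ring
  have hmain := stepA.symm.trans stepB
  have hcancel := mul_right_cancel₀ (Real.exp_ne_zero a) hmain
  unfold dowling
  exact hcancel


lemma ifsum (n r s : ℕ) (hr : r ≤ n) (a : ℝ) :
    ∑ l ∈ Finset.range (n+1),
        (if l ≤ r then a^(r-l)/(((r-l).factorial:ℕ):ℝ) else 0)
          * (((s.choose l:ℕ):ℝ) * a^s/((s.factorial:ℕ):ℝ))
      = ∑ l ∈ Finset.range (r+1), a^(r-l)/(((r-l).factorial:ℕ):ℝ)
          * (((s.choose l:ℕ):ℝ) * a^s/((s.factorial:ℕ):ℝ)) := by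
  rw [← Finset.sum_subset (Finset.range_subset_range.mpr (by omega : r+1 ≤ n+1))]
  · apply Finset.sum_congr rfl
    intro l hl
    rw [if_pos (by have := Finset.mem_range.mp hl; omega)]
  · intro l _ hl
    have hrl : r < l := by
      simp only [Finset.mem_range] at hl; omega
    rw [if_neg (by omega), zero_mul]

end DowHankel

open DowHankel Matrix

/-- The Hankel determinant of the Dowling polynomials is
`(mx)^{C(n+1,2)} ∏_{k=0}^n k!`. -/
theorem dowling_hankel (m : ℕ) (hm : 0 < m) (x : ℝ) (n : ℕ) :
    Matrix.det (Matrix.of fun i j : Fin (n + 1) => dowling m ((i : ℕ) + (j : ℕ)) x) =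
      ((m : ℝ) * x) ^ ((n + 1).choose 2) *
        ∏ k ∈ Finset.range (n + 1), (k.factorial : ℝ) := by
  have hm' : m ≠ 0 := hm.ne'
  set a : ℝ := x/(m:ℝ) with ha
  set B : Matrix (Fin (n+1)) (Fin (n+1)) ℝ :=
    Matrix.of (fun i k : Fin (n+1) => (m:ℝ)^(k:ℕ) * (((k:ℕ).factorial:ℕ):ℝ) * whitney2 m i k) with hB
  set Mt : Matrix (Fin (n+1)) (Fin (n+1)) ℝ :=
    Matrix.of (fun r l : Fin (n+1) =>
      if (l:ℕ) ≤ (r:ℕ) then a^((r:ℕ)-(l:ℕ))/(((((r:ℕ)-(l:ℕ)).factorial):ℕ):ℝ) else 0) with hMt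
  set Nt : Matrix (Fin (n+1)) (Fin (n+1)) ℝ :=
    Matrix.of (fun l s : Fin (n+1) =>
      (((s:ℕ).choose (l:ℕ):ℕ):ℝ) * a^(s:ℕ)/((((s:ℕ).factorial):ℕ):ℝ)) with hNt
  have hfact : (Matrix.of fun i j : Fin (n + 1) => dowling m ((i : ℕ) + (j : ℕ)) x)
      = B * (Mt * Nt) * Bᵀ := by
    ext i j
    show dowling m ((i : ℕ) + (j : ℕ)) x = _
    rw [entry m hm' x n i j (by omega) (by omega)]
    simp only [Matrix.mul_apply, Matrix.transpose_apply, hB, hMt, hNt, Matrix.of_apply]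
    rw [Finset.sum_comm]
    rw [Fin.sum_univ_eq_sum_range (fun s => (∑ r : Fin (n+1),
        (m:ℝ)^(r:ℕ) * (((r:ℕ).factorial):ℝ) * whitney2 m i r
          * ∑ l : Fin (n+1), (if (l:ℕ) ≤ (r:ℕ) then
              a^((r:ℕ)-(l:ℕ))/((((r:ℕ)-(l:ℕ)).factorial):ℝ) else 0)
            * ((s.choose (l:ℕ):ℝ) * a^s/((s.factorial):ℝ)))
        * ((m:ℝ)^s * ((s.factorial):ℝ) * whitney2 m j s)) (n+1)]
    apply Finset.sum_congr rfl
    intro s hs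
    rw [Finset.sum_mul]
    rw [Fin.sum_univ_eq_sum_range (fun r => ((m:ℝ)^r * ((r.factorial):ℝ) * whitney2 m i r
          * ∑ l : Fin (n+1), (if (l:ℕ) ≤ r then
              a^(r-(l:ℕ))/((((r-(l:ℕ)).factorial)):ℝ) else 0)
            * ((s.choose (l:ℕ):ℝ) * a^s/((s.factorial):ℝ)))
        * ((m:ℝ)^s * ((s.factorial):ℝ) * whitney2 m j s)) (n+1)]
    apply Finset.sum_congr rfl
    intro r hr
    rw [Fin.sum_univ_eq_sum_range (fun l => (if l ≤ r then
              a^(r-l)/((((r-l).factorial)):ℝ) else 0)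
            * ((s.choose l:ℝ) * a^s/((s.factorial):ℝ))) (n+1)]
    rw [ifsum n r s (by have := Finset.mem_range.mp hr; omega) a]
    ring
  rw [hfact, Matrix.det_mul, Matrix.det_mul, Matrix.det_mul, Matrix.det_transpose]
  have hdetB : B.det = ∏ i ∈ Finset.range (n+1), ((m:ℝ)^i * (i.factorial:ℝ)) := by
    rw [Matrix.det_of_lowerTriangular B (by
      intro i j hij
      have hij' : (i:ℕ) < (j:ℕ) := hij
      show (m:ℝ)^(j:ℕ) * (((j:ℕ).factorial:ℕ):ℝ) * whitney2 m i j = 0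
      rw [whitney2_vanish m i j hij']
      ring)]
    have : ∀ i : Fin (n+1), B i i = (m:ℝ)^(i:ℕ) * (((i:ℕ).factorial:ℕ):ℝ) := by
      intro i
      show (m:ℝ)^(i:ℕ) * (((i:ℕ).factorial:ℕ):ℝ) * whitney2 m i i = _
      rw [whitney2_diag m i hm', mul_one]
    rw [Finset.prod_congr rfl (fun i _ => this i)]
    exact Fin.prod_univ_eq_prod_range (fun i => (m:ℝ)^i * (i.factorial:ℝ)) (n+1)
  have hdetM : Mt.det = 1 := by
    rw [Matrix.det_of_lowerTriangular Mt (by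
      intro i j hij
      have hij' : (i:ℕ) < (j:ℕ) := hij
      show (if (j:ℕ) ≤ (i:ℕ) then _ else 0) = 0
      rw [if_neg (by omega)])]
    have : ∀ i : Fin (n+1), Mt i i = 1 := by
      intro i
      show (if (i:ℕ) ≤ (i:ℕ) then a^((i:ℕ)-(i:ℕ))/(((((i:ℕ)-(i:ℕ)).factorial):ℕ):ℝ) else 0) = 1
      rw [if_pos (le_refl _), Nat.sub_self]
      simp
    rw [Finset.prod_congr rfl (fun i _ => this i), Finset.prod_const_one]
  have hdetN : Nt.det = ∏ s ∈ Finset.range (n+1), (a^s/(s.factorial:ℝ)) := by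
    rw [Matrix.det_of_upperTriangular (by
      intro i j hij
      have hij' : (j:ℕ) < (i:ℕ) := hij
      show (((j:ℕ).choose (i:ℕ):ℕ):ℝ) * a^(j:ℕ)/((((j:ℕ).factorial):ℕ):ℝ) = 0
      rw [Nat.choose_eq_zero_of_lt hij']
      simp)]
    have : ∀ i : Fin (n+1), Nt i i = a^(i:ℕ)/(((i:ℕ).factorial:ℕ):ℝ) := by
      intro i
      show (((i:ℕ).choose (i:ℕ):ℕ):ℝ) * a^(i:ℕ)/((((i:ℕ).factorial):ℕ):ℝ) = _
      rw [Nat.choose_self]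
      simp
    rw [Finset.prod_congr rfl (fun i _ => this i)]
    exact Fin.prod_univ_eq_prod_range (fun i => a^i/(i.factorial:ℝ)) (n+1)
  rw [hdetB, hdetM, hdetN, one_mul]
  have hsum : ∑ i ∈ Finset.range (n+1), i = (n+1).choose 2 := by
    rw [Finset.sum_range_id, Nat.choose_two_right]
  have hma : (m:ℝ) * ((m:ℝ) * a) = (m:ℝ) * x := by
    rw [ha]
    field_simp
  calc (∏ i ∈ Finset.range (n+1), ((m:ℝ)^i * (i.factorial:ℝ)))
        * (∏ s ∈ Finset.range (n+1), (a^s/(s.factorial:ℝ)))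
        * (∏ i ∈ Finset.range (n+1), ((m:ℝ)^i * (i.factorial:ℝ)))
      = ∏ i ∈ Finset.range (n+1), (((m:ℝ)*((m:ℝ)*a))^i * (i.factorial:ℝ)) := by
        rw [← Finset.prod_mul_distrib, ← Finset.prod_mul_distrib]
        apply Finset.prod_congr rfl
        intro i _
        have hfac : ((i.factorial:ℕ):ℝ) ≠ 0 := Nat.cast_ne_zero.mpr (Nat.factorial_ne_zero _)
        rw [mul_pow, mul_pow]
        field_simp
    _ = ((m:ℝ) * x) ^ ((n + 1).choose 2) * ∏ k ∈ Finset.range (n + 1), (k.factorial : ℝ) := by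
        rw [Finset.prod_mul_distrib, Finset.prod_pow_eq_pow_sum, hsum, hma]
end

section
/- Let m be a positive integer and x a real number. Then in ℝ[[z]] the exponential generating function of the Tanny-Dowling polynomials satisfies (m + x − x·e^{mz}) · ∑_{n≥0} 𝓕_m(n,x) z^n/n! = m·e^z; equivalently ∑_{n≥0} 𝓕_m(n,x) z^n/n! = m e^z/(m + x − x e^{mz}). -/
/-- Tanny–Dowling polynomials `𝓕_m(n,x) = ∑_{k=0}^n k!·W_m(n,k)·x^k`. -/
noncomputable def tannyDowling (m n : ℕ) (x : ℝ) : ℝ :=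
  ∑ k ∈ Finset.range (n + 1), (k.factorial : ℝ) * whitney2 m n k * x ^ k

open Finset Function

/-- Auxiliary: the `k`-th forward difference at `0` of `i ↦ (m·i+1)^n`. -/
private noncomputable def Aa (m n k : ℕ) : ℝ :=
  (fwdDiff (1 : ℕ))^[k] (fun i : ℕ => ((m : ℝ) * i + 1) ^ n) 0

private lemma Aa_eq (m n k : ℕ) :
    Aa m n k
      = ∑ i ∈ Finset.range (k + 1),
          (-1 : ℝ) ^ (k - i) * (k.choose i) * ((m : ℝ) * i + 1) ^ n := by
  rw [Aa, fwdDiff_iter_eq_sum_shift]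
  refine Finset.sum_congr rfl fun i _ => ?_
  simp only [zero_add, smul_eq_mul, mul_one, zsmul_eq_mul]
  push_cast
  ring

/-- Iterated forward differences of a polynomial vanish beyond the degree. -/
private lemma fwdDiff_pow_vanish (a b : ℝ) (n : ℕ) :
    ∀ k : ℕ, n < k → (fwdDiff (1 : ℕ))^[k] (fun i : ℕ => (a * i + b) ^ n) = 0 := by
  induction n using Nat.strong_induction_on with
  | _ n IH =>
    intro k hk
    obtain ⟨j, rfl⟩ : ∃ j, k = j + 1 :=
      ⟨k - 1, (Nat.succ_pred_eq_of_pos (Nat.zero_lt_of_lt hk)).symm⟩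
    have hnj : n ≤ j := Nat.lt_succ_iff.mp hk
    have hdiff : fwdDiff (1 : ℕ) (fun i : ℕ => (a * i + b) ^ n)
        = ∑ l ∈ Finset.range n,
            (a ^ (n - l) * (n.choose l : ℝ)) • (fun i : ℕ => (a * i + b) ^ l) := by
      funext i
      have h1 : (a * ((i + 1 : ℕ) : ℝ) + b) = (a * i + b) + a := by push_cast; ring
      simp only [fwdDiff, Finset.sum_apply, Pi.smul_apply, smul_eq_mul]
      rw [h1, add_pow, Finset.sum_range_succ, Nat.sub_self, pow_zero, Nat.choose_self,
        Nat.cast_one, mul_one, mul_one, add_sub_cancel_right]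
      exact Finset.sum_congr rfl fun l _ => by ring
    rw [Function.iterate_succ_apply, hdiff, fwdDiff_iter_finset_sum]
    refine Finset.sum_eq_zero fun l hl => ?_
    have hl' := Finset.mem_range.mp hl
    rw [fwdDiff_iter_const_smul, IH l hl' j (lt_of_lt_of_le hl' hnj), smul_zero]

private lemma Aa_vanish (m n k : ℕ) (h : n < k) : Aa m n k = 0 := by
  rw [Aa, fwdDiff_pow_vanish (m : ℝ) 1 n k h]
  rfl

private lemma Aa_zero (m n : ℕ) : Aa m n 0 = 1 := by
  simp [Aa]

/-- The "Pascal" identity relating the shifted alternating sum to `Aa`. -/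
private lemma Bsum_eq (m n k : ℕ) :
    ∑ i ∈ Finset.range (k + 1),
        (-1 : ℝ) ^ (k - i) * (k.choose i) * ((m : ℝ) * ((i : ℝ) + 1) + 1) ^ n
      = Aa m n (k + 1) + Aa m n k := by
  have hg : (fun i : ℕ => ((m : ℝ) * ((i : ℝ) + 1) + 1) ^ n)
      = (fun i : ℕ => ((m : ℝ) * i + 1) ^ n)
        + fwdDiff (1 : ℕ) (fun i : ℕ => ((m : ℝ) * i + 1) ^ n) := by
    funext i
    simp only [Pi.add_apply, fwdDiff]
    push_cast
    ring
  have h1 : ∑ i ∈ Finset.range (k + 1),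
        (-1 : ℝ) ^ (k - i) * (k.choose i) * ((m : ℝ) * ((i : ℝ) + 1) + 1) ^ n
      = (fwdDiff (1 : ℕ))^[k] (fun i : ℕ => ((m : ℝ) * ((i : ℝ) + 1) + 1) ^ n) 0 := by
    rw [fwdDiff_iter_eq_sum_shift]
    refine Finset.sum_congr rfl fun i _ => ?_
    simp only [zero_add, smul_eq_mul, mul_one, zsmul_eq_mul]
    push_cast
    ring
  have hA : Aa m n (k + 1)
      = (fwdDiff (1 : ℕ))^[k] (fwdDiff (1 : ℕ) (fun i : ℕ => ((m : ℝ) * i + 1) ^ n)) 0 :=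
    congrFun (Function.iterate_succ_apply (fwdDiff (1 : ℕ)) k _) 0
  rw [h1, hg, fwdDiff_iter_add, Pi.add_apply]
  exact add_comm _ _

private lemma factorial_mul_whitney2 (m n k : ℕ) (hm : 0 < m) :
    (k.factorial : ℝ) * whitney2 m n k = (1 / (m : ℝ) ^ k) * Aa m n k := by
  have hk : (k.factorial : ℝ) ≠ 0 := Nat.cast_ne_zero.mpr k.factorial_ne_zero
  have hmr : (m : ℝ) ≠ 0 := Nat.cast_ne_zero.mpr hm.ne'
  rw [whitney2, Aa_eq]
  field_simp

/-- `𝓕_m(j,x)` as a sum over an extended range (extra terms vanish). -/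
private lemma tannyDowling_eq_extended (m : ℕ) (hm : 0 < m) (x : ℝ) (j n : ℕ) (hj : j ≤ n) :
    tannyDowling m j x
      = ∑ k ∈ Finset.range (n + 1), x ^ k / (m : ℝ) ^ k * Aa m j k := by
  have hsub : Finset.range (j + 1) ⊆ Finset.range (n + 1) := by
    intro t ht
    simp only [Finset.mem_range] at ht ⊢
    omega
  calc tannyDowling m j x
      = ∑ k ∈ Finset.range (j + 1), x ^ k / (m : ℝ) ^ k * Aa m j k := by
        refine Finset.sum_congr rfl fun k _ => ?_
        rw [factorial_mul_whitney2 m j k hm]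
        ring
    _ = ∑ k ∈ Finset.range (n + 1), x ^ k / (m : ℝ) ^ k * Aa m j k := by
        refine Finset.sum_subset hsub fun k _ hk' => ?_
        simp only [Finset.mem_range, not_lt] at hk'
        rw [Aa_vanish m j k (by omega)]
        ring

/-- The key recurrence: `(m + x)·𝓕(n) − x·∑_i C(n,i)·m^i·𝓕(n−i) = m`. -/
private lemma tannyDowling_rec (m : ℕ) (hm : 0 < m) (x : ℝ) (n : ℕ) :
    ((m : ℝ) + x) * tannyDowling m n x
      - x * ∑ i ∈ Finset.range (n + 1),
          (n.choose i : ℝ) * (m : ℝ) ^ i * tannyDowling m (n - i) x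
      = m := by
  have hmr : (m : ℝ) ≠ 0 := Nat.cast_ne_zero.mpr hm.ne'
  have hconv : ∑ i ∈ Finset.range (n + 1),
        (n.choose i : ℝ) * (m : ℝ) ^ i * tannyDowling m (n - i) x
      = ∑ k ∈ Finset.range (n + 1),
          x ^ k / (m : ℝ) ^ k * (Aa m n (k + 1) + Aa m n k) := by
    calc ∑ i ∈ Finset.range (n + 1),
          (n.choose i : ℝ) * (m : ℝ) ^ i * tannyDowling m (n - i) x
        = ∑ i ∈ Finset.range (n + 1), ∑ k ∈ Finset.range (n + 1),
            (n.choose i : ℝ) * (m : ℝ) ^ i * (x ^ k / (m : ℝ) ^ k * Aa m (n - i) k) := by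
          refine Finset.sum_congr rfl fun i _ => ?_
          rw [tannyDowling_eq_extended m hm x (n - i) n (Nat.sub_le n i), Finset.mul_sum]
      _ = ∑ k ∈ Finset.range (n + 1), ∑ i ∈ Finset.range (n + 1),
            (n.choose i : ℝ) * (m : ℝ) ^ i * (x ^ k / (m : ℝ) ^ k * Aa m (n - i) k) :=
          Finset.sum_comm
      _ = ∑ k ∈ Finset.range (n + 1), x ^ k / (m : ℝ) ^ k *
            ∑ i ∈ Finset.range (n + 1), (n.choose i : ℝ) * (m : ℝ) ^ i * Aa m (n - i) k := by
          refine Finset.sum_congr rfl fun k _ => ?_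
          rw [Finset.mul_sum]
          exact Finset.sum_congr rfl fun i _ => by ring
      _ = ∑ k ∈ Finset.range (n + 1),
            x ^ k / (m : ℝ) ^ k * (Aa m n (k + 1) + Aa m n k) := by
          refine Finset.sum_congr rfl fun k _ => ?_
          congr 1
          calc ∑ i ∈ Finset.range (n + 1), (n.choose i : ℝ) * (m : ℝ) ^ i * Aa m (n - i) k
              = ∑ i ∈ Finset.range (n + 1), ∑ l ∈ Finset.range (k + 1),
                  (n.choose i : ℝ) * (m : ℝ) ^ i *
                    ((-1 : ℝ) ^ (k - l) * (k.choose l) * ((m : ℝ) * l + 1) ^ (n - i)) := by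
                refine Finset.sum_congr rfl fun i _ => ?_
                rw [Aa_eq, Finset.mul_sum]
            _ = ∑ l ∈ Finset.range (k + 1), ∑ i ∈ Finset.range (n + 1),
                  (n.choose i : ℝ) * (m : ℝ) ^ i *
                    ((-1 : ℝ) ^ (k - l) * (k.choose l) * ((m : ℝ) * l + 1) ^ (n - i)) :=
                Finset.sum_comm
            _ = ∑ l ∈ Finset.range (k + 1),
                  (-1 : ℝ) ^ (k - l) * (k.choose l) * ((m : ℝ) * ((l : ℝ) + 1) + 1) ^ n := by
                refine Finset.sum_congr rfl fun l _ => ?_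
                have hbin : ((m : ℝ) + ((m : ℝ) * l + 1)) ^ n
                    = ∑ i ∈ Finset.range (n + 1),
                        (m : ℝ) ^ i * ((m : ℝ) * l + 1) ^ (n - i) * (n.choose i) :=
                  add_pow _ _ n
                have heq : ((m : ℝ) * ((l : ℝ) + 1) + 1) ^ n
                    = ((m : ℝ) + ((m : ℝ) * l + 1)) ^ n := by ring_nf
                rw [heq, hbin, Finset.mul_sum]
                exact Finset.sum_congr rfl fun i _ => by ring
            _ = Aa m n (k + 1) + Aa m n k := Bsum_eq m n k
  rw [hconv, tannyDowling_eq_extended m hm x n n le_rfl]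
  have expand : ((m : ℝ) + x) * ∑ k ∈ Finset.range (n + 1), x ^ k / (m : ℝ) ^ k * Aa m n k
      - x * ∑ k ∈ Finset.range (n + 1),
          x ^ k / (m : ℝ) ^ k * (Aa m n (k + 1) + Aa m n k)
      = (m : ℝ) * ((∑ k ∈ Finset.range (n + 1), x ^ k / (m : ℝ) ^ k * Aa m n k)
          - ∑ k ∈ Finset.range (n + 1), x ^ (k + 1) / (m : ℝ) ^ (k + 1) * Aa m n (k + 1)) := by
    simp only [Finset.mul_sum, mul_sub, Finset.mul_sum, ← Finset.sum_sub_distrib]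
    refine Finset.sum_congr rfl fun k _ => ?_
    field_simp
    ring
  rw [expand]
  have h2 : ∑ k ∈ Finset.range (n + 2), x ^ k / (m : ℝ) ^ k * Aa m n k
      = (∑ k ∈ Finset.range (n + 1), x ^ (k + 1) / (m : ℝ) ^ (k + 1) * Aa m n (k + 1))
        + x ^ 0 / (m : ℝ) ^ 0 * Aa m n 0 := Finset.sum_range_succ' _ _
  have h3 : ∑ k ∈ Finset.range (n + 2), x ^ k / (m : ℝ) ^ k * Aa m n k
      = (∑ k ∈ Finset.range (n + 1), x ^ k / (m : ℝ) ^ k * Aa m n k)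
        + x ^ (n + 1) / (m : ℝ) ^ (n + 1) * Aa m n (n + 1) := Finset.sum_range_succ _ _
  rw [Aa_vanish m n (n + 1) n.lt_succ_self, mul_zero, add_zero] at h3
  rw [Aa_zero, pow_zero, pow_zero, mul_one] at h2
  norm_num at h2
  have htel : (∑ k ∈ Finset.range (n + 1), x ^ k / (m : ℝ) ^ k * Aa m n k)
      - ∑ k ∈ Finset.range (n + 1), x ^ (k + 1) / (m : ℝ) ^ (k + 1) * Aa m n (k + 1) = 1 := by
    rw [← h3, h2]
    ring
  rw [htel, mul_one]

/-- The EGF of the Tanny–Dowling polynomials satisfies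
`(m + x − x·e^{mz}) · ∑_{n≥0} 𝓕_m(n,x) z^n/n! = m·e^z` in `ℝ[[z]]`;
equivalently `∑ 𝓕_m(n,x) z^n/n! = m e^z/(m + x − x e^{mz})`. -/
theorem tannyDowling_egf (m : ℕ) (hm : 0 < m) (x : ℝ) :
    (PowerSeries.C ((m : ℝ) + x) -
        PowerSeries.C x * PowerSeries.rescale (m : ℝ) (PowerSeries.exp ℝ)) *
      PowerSeries.mk (fun n => tannyDowling m n x / n.factorial) =
      PowerSeries.C (m : ℝ) * PowerSeries.exp ℝ := by
  ext n
  have hn : (n.factorial : ℝ) ≠ 0 := Nat.cast_ne_zero.mpr n.factorial_ne_zero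
  rw [sub_mul, mul_assoc]
  simp only [map_sub, PowerSeries.coeff_C_mul, PowerSeries.coeff_mk, PowerSeries.coeff_exp]
  rw [PowerSeries.coeff_mul, Finset.Nat.sum_antidiagonal_eq_sum_range_succ_mk]
  have hterm : ∀ i ∈ Finset.range (n + 1),
      PowerSeries.coeff (i, n - i).1 (PowerSeries.rescale (m : ℝ) (PowerSeries.exp ℝ)) *
        PowerSeries.coeff (i, n - i).2
          (PowerSeries.mk fun n => tannyDowling m n x / n.factorial)
      = (n.choose i : ℝ) * (m : ℝ) ^ i * tannyDowling m (n - i) x / n.factorial := by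
    intro i hi
    have hi' : i ≤ n := Nat.lt_succ_iff.mp (Finset.mem_range.mp hi)
    rw [PowerSeries.coeff_rescale, PowerSeries.coeff_exp, PowerSeries.coeff_mk]
    have hfact : (n.choose i : ℝ) * (i.factorial : ℝ) * ((n - i).factorial : ℝ)
        = (n.factorial : ℝ) := by
      have := Nat.choose_mul_factorial_mul_factorial hi'
      push_cast [← this]
      ring
    have hif : (i.factorial : ℝ) ≠ 0 := Nat.cast_ne_zero.mpr i.factorial_ne_zero
    have hnif : ((n - i).factorial : ℝ) ≠ 0 := Nat.cast_ne_zero.mpr (n - i).factorial_ne_zero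
    have halg : (algebraMap ℚ ℝ) (1 / (i.factorial : ℚ)) = 1 / (i.factorial : ℝ) := by
      simp [map_div₀]
    rw [halg]
    field_simp
    linear_combination (-(tannyDowling m (n - i) x)) * hfact
  rw [Finset.sum_congr rfl hterm]
  have key := tannyDowling_rec m hm x n
  have halg2 : (algebraMap ℚ ℝ) (1 / (n.factorial : ℚ)) = 1 / (n.factorial : ℝ) := by
    simp [map_div₀]
  rw [halg2, ← Finset.sum_div]
  linear_combination key / (n.factorial : ℝ)
end

section
/- Let m be a positive integer and x a real number. For every n ≥ 0, the Hankel determinant of the Tanny-Dowling polynomials satisfies det( (𝓕_m(i+j, x))_{0 ≤ i,j ≤ n} ) = (x(x+m))^{C(n+1,2)} · ∏_{k=0}^n (k!)^2, where C(n+1,2) = n(n+1)/2. -/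
open Finset Function fwdDiff

namespace TDH

/-- The normalized Whitney sums `V m n r = Δ^r [(m·+1)^n](0)`. -/
noncomputable def V (m n r : ℕ) : ℝ :=
  ∑ a ∈ Finset.range (r + 1), (-1 : ℝ) ^ (r - a) * (r.choose a) * ((m : ℝ) * a + 1) ^ n

lemma fwdDiff_iter_cast (f : ℕ → ℤ) (r : ℕ) :
    (fwdDiff 1)^[r] (fun a : ℕ => (f a : ℝ)) = fun a => (((fwdDiff 1)^[r] f a : ℤ) : ℝ) := by
  induction r with
  | zero => simp
  | succ r ih =>
    rw [iterate_succ_apply', iterate_succ_apply', ih]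
    ext a
    simp [fwdDiff]

lemma fwdDiff_iter_eq_sum (f : ℕ → ℝ) (r : ℕ) :
    (fwdDiff 1)^[r] f 0 = ∑ a ∈ Finset.range (r + 1),
      (-1 : ℝ) ^ (r - a) * (r.choose a) * f a := by
  rw [fwdDiff_iter_eq_sum_shift]
  refine Finset.sum_congr rfl fun a _ => ?_
  have : (0 : ℕ) + a • (1 : ℕ) = a := by simp
  rw [this, zsmul_eq_mul]
  push_cast
  ring

lemma V_eq_fwdDiff (m n r : ℕ) :
    V m n r = (fwdDiff 1)^[r] (fun a : ℕ => ((m : ℝ) * a + 1) ^ n) 0 := by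
  rw [fwdDiff_iter_eq_sum, V]

/-- Newton's forward-difference formula with a flexible range. -/
lemma newton (f : ℕ → ℝ) (a N : ℕ) (h : a ≤ N) :
    f a = ∑ r ∈ Finset.range (N + 1), (a.choose r : ℝ) * (fwdDiff 1)^[r] f 0 := by
  calc f a = f (0 + a • (1:ℕ)) := by simp
    _ = ∑ r ∈ Finset.range (a + 1), a.choose r • (fwdDiff 1)^[r] f 0 :=
        shift_eq_sum_fwdDiff_iter 1 f a 0
    _ = ∑ r ∈ Finset.range (N + 1), a.choose r • (fwdDiff 1)^[r] f 0 := by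
        refine Finset.sum_subset (Finset.range_subset_range.2 (by omega)) fun r _ hr => ?_
        rw [Finset.mem_range, not_lt] at hr
        rw [Nat.choose_eq_zero_of_lt (by omega), zero_smul]
    _ = ∑ r ∈ Finset.range (N + 1), (a.choose r : ℝ) * (fwdDiff 1)^[r] f 0 :=
        Finset.sum_congr rfl fun r _ => nsmul_eq_mul _ _

lemma fwdDiff_iter_choose_zero_real (r t : ℕ) :
    (fwdDiff 1)^[r] (fun a : ℕ => (a.choose t : ℝ)) 0 = if r = t then 1 else 0 := by
  have : (fun a : ℕ => (a.choose t : ℝ)) = fun a : ℕ => (((a.choose t : ℤ)) : ℝ) := by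
    push_cast; rfl
  rw [this, fwdDiff_iter_cast]
  simp only [fwdDiff_iter_choose_zero t r]
  split <;> simp

/-- the key "delta" orthogonality: `Δ^r C(·,t) (0) = δ_{r,t}` in summed form. -/
lemma alt_sum_choose (r t : ℕ) :
    ∑ a ∈ Finset.range (r + 1), (-1 : ℝ) ^ (r - a) * (r.choose a) * (a.choose t) =
      if r = t then 1 else 0 := by
  rw [← fwdDiff_iter_eq_sum (fun a : ℕ => (a.choose t : ℝ)) r,
    fwdDiff_iter_choose_zero_real]

lemma choose_mul_real (a t : ℕ) :
    (a : ℝ) * a.choose t = (t + 1) * a.choose (t + 1) + t * a.choose t := by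
  rcases le_or_gt t a with h | h
  · have h1 := Nat.choose_succ_right_eq a t
    have h2 : ((a.choose (t+1) * (t+1) : ℕ) : ℝ) = ((a.choose t * (a - t) : ℕ) : ℝ) := by
      rw [h1]
    push_cast [Nat.cast_sub h] at h2
    ring_nf at h2 ⊢
    linarith
  · rw [Nat.choose_eq_zero_of_lt h, Nat.choose_eq_zero_of_lt (h.trans (Nat.lt_succ_self t))]
    simp

lemma g_rep (m i : ℕ) : ∃ c : ℕ → ℝ,
    (∀ t, i < t → c t = 0) ∧
    (∀ a : ℕ, ((m : ℝ) * a + 1) ^ i = ∑ t ∈ Finset.range (i + 1), c t * a.choose t) ∧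
    c i = (m : ℝ) ^ i * i.factorial := by
  induction i with
  | zero =>
    refine ⟨fun t => if t = 0 then 1 else 0, fun t ht => by simp [ht.ne'], ?_, by simp⟩
    intro a; simp
  | succ i ih =>
    obtain ⟨c, hc0, hrep, hci⟩ := ih
    refine ⟨fun u => ((m : ℝ) * u + 1) * c u + (m : ℝ) * u * c (u - 1), ?_, ?_, ?_⟩
    · intro t ht
      dsimp only
      rw [hc0 t (by omega), hc0 (t - 1) (by omega)]
      ring
    · intro a
      have step : ((m : ℝ) * a + 1) ^ (i + 1) =
          ∑ t ∈ Finset.range (i + 1),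
            ((m : ℝ) * (t + 1) * c t * a.choose (t + 1) +
              ((m : ℝ) * t + 1) * c t * a.choose t) := by
        rw [pow_succ, hrep a, Finset.sum_mul]
        refine Finset.sum_congr rfl fun t _ => ?_
        have h1 := choose_mul_real a t
        linear_combination ((m : ℝ) * c t) * h1
      rw [step, Finset.sum_add_distrib]
      have e1 : ∑ t ∈ Finset.range (i + 1), (m : ℝ) * (t + 1) * c t * a.choose (t + 1) =
          ∑ u ∈ Finset.range (i + 2), (m : ℝ) * u * c (u - 1) * a.choose u := by
        rw [Finset.sum_range_succ' (fun u => (m : ℝ) * u * c (u - 1) * a.choose u) (i + 1)]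
        simp [Nat.add_sub_cancel]
      have e2 : ∑ t ∈ Finset.range (i + 1), ((m : ℝ) * t + 1) * c t * a.choose t =
          ∑ u ∈ Finset.range (i + 2), ((m : ℝ) * u + 1) * c u * a.choose u := by
        rw [Finset.sum_range_succ _ (i + 1), hc0 (i + 1) (Nat.lt_succ_self i)]
        simp
      rw [e1, e2, ← Finset.sum_add_distrib]
      refine Finset.sum_congr rfl fun u _ => ?_
      ring
    · have h1 : c (i + 1) = 0 := hc0 (i + 1) (Nat.lt_succ_self i)
      have h2 : (i + 1) - 1 = i := by omega
      dsimp only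
      rw [h1, h2, hci, Nat.factorial_succ]
      push_cast
      ring

lemma V_formula (m i r : ℕ) (c : ℕ → ℝ)
    (hrep : ∀ a : ℕ, ((m : ℝ) * a + 1) ^ i = ∑ t ∈ Finset.range (i + 1), c t * a.choose t) :
    V m i r = if r ∈ Finset.range (i + 1) then c r else 0 := by
  rw [V]
  calc ∑ a ∈ Finset.range (r + 1), (-1 : ℝ) ^ (r - a) * (r.choose a) * ((m : ℝ) * a + 1) ^ i
      = ∑ a ∈ Finset.range (r + 1), ∑ t ∈ Finset.range (i + 1),
          c t * ((-1 : ℝ) ^ (r - a) * (r.choose a) * (a.choose t)) := by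
        refine Finset.sum_congr rfl fun a _ => ?_
        rw [hrep a, Finset.mul_sum]
        refine Finset.sum_congr rfl fun t _ => ?_
        ring
    _ = ∑ t ∈ Finset.range (i + 1), c t *
          ∑ a ∈ Finset.range (r + 1), (-1 : ℝ) ^ (r - a) * (r.choose a) * (a.choose t) := by
        rw [Finset.sum_comm]
        exact Finset.sum_congr rfl fun t _ => (Finset.mul_sum _ _ _).symm
    _ = ∑ t ∈ Finset.range (i + 1), c t * (if r = t then 1 else 0) := by
        exact Finset.sum_congr rfl fun t _ => by rw [alt_sum_choose]
    _ = if r ∈ Finset.range (i + 1) then c r else 0 := by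
        simp only [mul_ite, mul_one, mul_zero]
        exact Finset.sum_ite_eq (Finset.range (i + 1)) r c

lemma V_vanish (m i r : ℕ) (h : i < r) : V m i r = 0 := by
  obtain ⟨c, _, hrep, _⟩ := g_rep m i
  rw [V_formula m i r c hrep, if_neg (by simp; omega)]

lemma V_diag (m i : ℕ) : V m i i = (m : ℝ) ^ i * i.factorial := by
  obtain ⟨c, _, hrep, hci⟩ := g_rep m i
  rw [V_formula m i i c hrep, if_pos (by simp), hci]
/-- `Δ^q [C(·+r, s)](0) = C(r, s-q)` for `q ≤ s`, else `0`. -/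
lemma alt_sum_choose_shift (q r s : ℕ) :
    ∑ b ∈ Finset.range (q + 1), (-1 : ℝ) ^ (q - b) * (q.choose b) * ((b + r).choose s) =
      if q ≤ s then ((r.choose (s - q) : ℕ) : ℝ) else 0 := by
  have step : ∀ b : ℕ, (((b + r).choose s : ℕ) : ℝ) =
      ∑ k ∈ Finset.range (s + 1), ((b.choose k : ℝ) * (r.choose (s - k))) := by
    intro b
    rw [Nat.add_choose_eq, Finset.Nat.sum_antidiagonal_eq_sum_range_succ_mk]
    push_cast
    rfl
  calc ∑ b ∈ Finset.range (q + 1), (-1 : ℝ) ^ (q - b) * (q.choose b) * ((b + r).choose s)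
      = ∑ b ∈ Finset.range (q + 1), ∑ k ∈ Finset.range (s + 1),
          ((r.choose (s - k) : ℝ)) * ((-1 : ℝ) ^ (q - b) * (q.choose b) * (b.choose k)) := by
        refine Finset.sum_congr rfl fun b _ => ?_
        rw [step b, Finset.mul_sum]
        exact Finset.sum_congr rfl fun k _ => by ring
    _ = ∑ k ∈ Finset.range (s + 1), ((r.choose (s - k) : ℝ)) *
          ∑ b ∈ Finset.range (q + 1), (-1 : ℝ) ^ (q - b) * (q.choose b) * (b.choose k) := by
        rw [Finset.sum_comm]
        exact Finset.sum_congr rfl fun k _ => (Finset.mul_sum _ _ _).symm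
    _ = ∑ k ∈ Finset.range (s + 1), ((r.choose (s - k) : ℝ)) * (if q = k then 1 else 0) := by
        exact Finset.sum_congr rfl fun k _ => by rw [alt_sum_choose]
    _ = if q ≤ s then ((r.choose (s - q) : ℕ) : ℝ) else 0 := by
        simp only [mul_ite, mul_one, mul_zero]
        rw [Finset.sum_ite_eq (Finset.range (s + 1)) q (fun k => ((r.choose (s - k) : ℕ) : ℝ))]
        simp [Nat.lt_succ_iff]

/-- `Δ^k [C(·,r)C(·,s)](0)`. -/
lemma quad_sum (k r s : ℕ) :
    ∑ a ∈ Finset.range (k + 1), (-1 : ℝ) ^ (k - a) * (k.choose a) * ((a.choose r) * (a.choose s)) =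
      (k.choose r : ℝ) * (if k - r ≤ s then ((r.choose (s - (k - r)) : ℕ) : ℝ) else 0) := by
  rcases le_or_gt r k with hrk | hrk
  · have h1 : ∑ a ∈ Finset.range (k + 1),
        (-1 : ℝ) ^ (k - a) * (k.choose a) * ((a.choose r) * (a.choose s)) =
        ∑ a ∈ Finset.Ico r (k + 1),
        (-1 : ℝ) ^ (k - a) * (k.choose a) * ((a.choose r) * (a.choose s)) := by
      refine (Finset.sum_subset ?_ ?_).symm
      · rw [Finset.range_eq_Ico]
        exact Finset.Ico_subset_Ico (Nat.zero_le r) le_rfl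
      · intro a ha ha'
        rw [Finset.mem_range] at ha
        rw [Finset.mem_Ico, not_and_or, not_le] at ha'
        have : a < r := by omega
        rw [Nat.choose_eq_zero_of_lt this]
        simp
    rw [h1, Finset.sum_Ico_eq_sum_range]
    have h2 : k + 1 - r = (k - r) + 1 := by omega
    rw [h2]
    calc ∑ b ∈ Finset.range (k - r + 1),
          (-1 : ℝ) ^ (k - (r + b)) * (k.choose (r + b)) * ((r + b).choose r * ((r + b).choose s))
        = ∑ b ∈ Finset.range (k - r + 1), (k.choose r : ℝ) *
            ((-1 : ℝ) ^ ((k - r) - b) * ((k - r).choose b) * ((b + r).choose s)) := by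
          refine Finset.sum_congr rfl fun b hb => ?_
          rw [Finset.mem_range] at hb
          have hbk : r + b ≤ k := by omega
          have hmul : k.choose (r + b) * (r + b).choose r = k.choose r * (k - r).choose b := by
            have := Nat.choose_mul (n := k) (Nat.le_add_right r b)
            simpa [Nat.add_sub_cancel_left] using this
          have hexp : k - (r + b) = (k - r) - b := by omega
          have hadd : r + b = b + r := by omega
          rw [hexp, hadd]
          have : ((k.choose (b + r) : ℕ) : ℝ) * ((b + r).choose r) =
              (k.choose r : ℝ) * ((k - r).choose b) := by
            rw [hadd] at hmul
            exact_mod_cast congrArg (Nat.cast : ℕ → ℝ) hmul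
          calc (-1 : ℝ) ^ ((k-r) - b) * (k.choose (b + r)) * ((b + r).choose r * ((b + r).choose s))
              = ((k.choose (b + r) : ℝ) * ((b + r).choose r)) *
                  ((-1 : ℝ) ^ ((k-r) - b) * ((b + r).choose s)) := by ring
            _ = ((k.choose r : ℝ) * ((k - r).choose b)) *
                  ((-1 : ℝ) ^ ((k-r) - b) * ((b + r).choose s)) := by rw [this]
            _ = (k.choose r : ℝ) *
                  ((-1 : ℝ) ^ ((k - r) - b) * ((k - r).choose b) * ((b + r).choose s)) := by ring
      _ = (k.choose r : ℝ) * (if k - r ≤ s then ((r.choose (s - (k - r)) : ℕ) : ℝ) else 0) := by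
          rw [← Finset.mul_sum, alt_sum_choose_shift]
  · have h0 : ∀ a ∈ Finset.range (k + 1),
        (-1 : ℝ) ^ (k - a) * (k.choose a) * ((a.choose r) * (a.choose s)) = 0 := by
      intro a ha
      rw [Finset.mem_range] at ha
      rw [Nat.choose_eq_zero_of_lt (by omega : a < r)]
      simp
    rw [Finset.sum_eq_zero h0, Nat.choose_eq_zero_of_lt hrk]
    simp

lemma choose_mul_all (r d b : ℕ) :
    r.choose (d + b) * (d + b).choose d = r.choose d * (r - d).choose b := by
  rcases le_or_gt (d + b) r with h | h
  · have := Nat.choose_mul (n := r) (Nat.le_add_right d b)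
    simpa [Nat.add_sub_cancel_left] using this
  · rw [Nat.choose_eq_zero_of_lt h]
    rcases le_or_gt d r with hd | hd
    · rw [Nat.choose_eq_zero_of_lt (by omega : r - d < b)]
      simp
    · rw [Nat.choose_eq_zero_of_lt hd]
      simp

/-- The triple-product identity `∑_t C(r,t)C(s,t)C(t,d) = C(r+s-d, r)·C(r,d)`. -/
lemma triple_choose (r s d : ℕ) :
    ∑ t ∈ Finset.range (r + s + 1), r.choose t * s.choose t * t.choose d =
      (r + s - d).choose r * r.choose d := by
  rcases le_or_gt d s with hds | hds
  · have h1 : ∑ t ∈ Finset.range (r + s + 1), r.choose t * s.choose t * t.choose d =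
        ∑ t ∈ Finset.Ico d (r + s + 1), r.choose t * s.choose t * t.choose d := by
      refine (Finset.sum_subset ?_ ?_).symm
      · rw [Finset.range_eq_Ico]
        exact Finset.Ico_subset_Ico (Nat.zero_le d) le_rfl
      · intro t ht ht'
        rw [Finset.mem_range] at ht
        rw [Finset.mem_Ico, not_and_or, not_le] at ht'
        rw [Nat.choose_eq_zero_of_lt (by omega : t < d)]
        simp
    rw [h1, Finset.sum_Ico_eq_sum_range]
    have h2 : r + s + 1 - d = (r + s - d) + 1 := by omega
    rw [h2]
    calc ∑ b ∈ Finset.range (r + s - d + 1),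
          r.choose (d + b) * s.choose (d + b) * (d + b).choose d
        = ∑ b ∈ Finset.range (r + s - d + 1),
            r.choose d * ((r - d).choose b * s.choose (d + b)) := by
          refine Finset.sum_congr rfl fun b _ => ?_
          calc r.choose (d + b) * s.choose (d + b) * (d + b).choose d
              = (r.choose (d + b) * (d + b).choose d) * s.choose (d + b) := by ring
            _ = (r.choose d * (r - d).choose b) * s.choose (d + b) := by rw [choose_mul_all]
            _ = r.choose d * ((r - d).choose b * s.choose (d + b)) := by ring
      _ = r.choose d * ∑ b ∈ Finset.range (r + s - d + 1), (r - d).choose b * s.choose (d + b) := by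
          rw [Finset.mul_sum]
      _ = r.choose d * ∑ b ∈ Finset.range (s - d + 1), (r - d).choose b * s.choose (s - d - b) := by
          congr 1
          have hsub : Finset.range (s - d + 1) ⊆ Finset.range (r + s - d + 1) :=
            Finset.range_subset_range.2 (by omega)
          refine (Finset.sum_subset hsub ?_).symm.trans ?_
          · intro b hb hb'
            rw [Finset.mem_range, not_lt] at hb'
            rw [Nat.choose_eq_zero_of_lt (by omega : s < d + b)]
            simp
          · refine Finset.sum_congr rfl fun b hb => ?_
            rw [Finset.mem_range] at hb
            congr 1
            rw [← Nat.choose_symm (by omega : d + b ≤ s)]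
            congr 1
            omega
      _ = r.choose d * (r + s - d).choose r := by
          rcases le_or_gt d r with hdr | hdr
          · congr 1
            have hgoal : (r - d + s).choose (s - d) =
                ∑ b ∈ Finset.range (s - d + 1), (r - d).choose b * s.choose (s - d - b) := by
              rw [Nat.add_choose_eq, Finset.Nat.sum_antidiagonal_eq_sum_range_succ_mk]
            rw [← hgoal]
            have e1 : r - d + s = r + s - d := by omega
            have e2 : s - d = (r + s - d) - r := by omega
            rw [e1, e2, Nat.choose_symm (by omega : r ≤ r + s - d)]
          · rw [Nat.choose_eq_zero_of_lt hdr, Nat.zero_mul, Nat.zero_mul]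
      _ = (r + s - d).choose r * r.choose d := by ring
  · have h0 : ∑ t ∈ Finset.range (r + s + 1), r.choose t * s.choose t * t.choose d = 0 := by
      refine Finset.sum_eq_zero fun t ht => ?_
      rcases le_or_gt t s with hts | hts
      · rw [Nat.choose_eq_zero_of_lt (by omega : t < d)]
        simp
      · rw [Nat.choose_eq_zero_of_lt hts]
        simp
    rw [h0]
    rcases le_or_gt d r with hdr | hdr
    · rw [Nat.choose_eq_zero_of_lt (by omega : r + s - d < r)]
      simp
    · rw [Nat.choose_eq_zero_of_lt hdr]
      simp
/-- The inner Hankel sum identity (Meixner-type LDL factor). -/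
lemma inner_sum (z : ℝ) (r s : ℕ) :
    ∑ k ∈ Finset.range (r + s + 1), z ^ k * (k.choose r : ℝ) *
        (if k - r ≤ s then ((r.choose (s - (k - r)) : ℕ) : ℝ) else 0) =
    ∑ t ∈ Finset.range (r + s + 1),
        (r.choose t : ℝ) * (s.choose t : ℝ) * z ^ (r - t) * z ^ (s - t) * (z * (z + 1)) ^ t := by
  have step1 : ∀ k ∈ Finset.range (r + s + 1),
      z ^ k * (k.choose r : ℝ) *
        (if k - r ≤ s then ((r.choose (s - (k - r)) : ℕ) : ℝ) else 0) =
      ∑ t ∈ Finset.range (r + s + 1),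
        z ^ k * ((r.choose t : ℝ) * (s.choose t : ℝ) * (t.choose (r + s - k) : ℝ)) := by
    intro k hk
    rw [Finset.mem_range] at hk
    have hk' : k ≤ r + s := by omega
    have tc := triple_choose r s (r + s - k)
    rw [(by omega : r + s - (r + s - k) = k)] at tc
    have tc' : ((k.choose r : ℕ) : ℝ) * ((r.choose (r + s - k) : ℕ) : ℝ) =
        ∑ t ∈ Finset.range (r + s + 1),
          (r.choose t : ℝ) * (s.choose t : ℝ) * (t.choose (r + s - k) : ℝ) := by
      have := congrArg (Nat.cast : ℕ → ℝ) tc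
      push_cast at this
      rw [this]
    rcases lt_or_ge k r with hkr | hkr
    · rw [Nat.choose_eq_zero_of_lt hkr] at tc' ⊢
      have hz : ∑ t ∈ Finset.range (r + s + 1),
          z ^ k * ((r.choose t : ℝ) * (s.choose t : ℝ) * (t.choose (r + s - k) : ℝ)) = 0 := by
        rw [← Finset.mul_sum, ← tc']
        simp
      rw [hz]
      simp
    · have hif : k - r ≤ s := by omega
      rw [if_pos hif, (by omega : s - (k - r) = r + s - k)]
      calc z ^ k * (k.choose r : ℝ) * ((r.choose (r + s - k) : ℕ) : ℝ)
          = z ^ k * (((k.choose r : ℕ) : ℝ) * ((r.choose (r + s - k) : ℕ) : ℝ)) := by ring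
        _ = z ^ k * ∑ t ∈ Finset.range (r + s + 1),
              (r.choose t : ℝ) * (s.choose t : ℝ) * (t.choose (r + s - k) : ℝ) := by rw [tc']
        _ = ∑ t ∈ Finset.range (r + s + 1),
              z ^ k * ((r.choose t : ℝ) * (s.choose t : ℝ) * (t.choose (r + s - k) : ℝ)) := by
            rw [Finset.mul_sum]
  rw [Finset.sum_congr rfl step1, Finset.sum_comm]
  refine Finset.sum_congr rfl fun t ht => ?_
  rw [Finset.mem_range] at ht
  have ht' : t ≤ r + s := by omega
  have hinner : ∑ k ∈ Finset.range (r + s + 1),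
      z ^ k * ((r.choose t : ℝ) * (s.choose t : ℝ) * (t.choose (r + s - k) : ℝ)) =
      (r.choose t : ℝ) * (s.choose t : ℝ) * (z ^ (r + s - t) * (1 + z) ^ t) := by
    have hrefl := Finset.sum_range_reflect
      (fun j => z ^ (r + s - j) * (t.choose j : ℝ)) (r + s + 1)
    have e1 : ∑ k ∈ Finset.range (r + s + 1),
        z ^ k * ((r.choose t : ℝ) * (s.choose t : ℝ) * (t.choose (r + s - k) : ℝ)) =
        (r.choose t : ℝ) * (s.choose t : ℝ) *
          ∑ k ∈ Finset.range (r + s + 1), z ^ (r + s - (r + s + 1 - 1 - k)) *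
            (t.choose (r + s + 1 - 1 - k) : ℝ) := by
      rw [Finset.mul_sum]
      refine Finset.sum_congr rfl fun k hk => ?_
      rw [Finset.mem_range] at hk
      rw [(by omega : r + s + 1 - 1 - k = r + s - k), (by omega : r + s - (r + s - k) = k)]
      ring
    rw [e1, hrefl]
    congr 1
    have e2 : ∑ j ∈ Finset.range (t + 1), z ^ (r + s - j) * (t.choose j : ℝ) =
        ∑ j ∈ Finset.range (r + s + 1), z ^ (r + s - j) * (t.choose j : ℝ) :=
      Finset.sum_subset (Finset.range_subset_range.2 (by omega)) fun j _ hj => by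
        rw [Finset.mem_range, not_lt] at hj
        rw [Nat.choose_eq_zero_of_lt (by omega : t < j)]
        simp
    rw [← e2]
    have e3 : (1 + z) ^ t = ∑ j ∈ Finset.range (t + 1),
        (1 : ℝ) ^ j * z ^ (t - j) * (t.choose j : ℝ) := add_pow 1 z t
    rw [e3, Finset.mul_sum]
    refine Finset.sum_congr rfl fun j hj => ?_
    rw [Finset.mem_range] at hj
    rw [one_pow, one_mul, ← mul_assoc, ← pow_add]
    rw [(by omega : r + s - t + (t - j) = r + s - j)]
  rw [hinner]
  rcases le_or_gt t r with htr | htr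
  · rcases le_or_gt t s with hts | hts
    · rw [mul_pow]
      have hzp : z ^ (r - t) * z ^ (s - t) * z ^ t = z ^ (r + s - t) := by
        rw [← pow_add, ← pow_add]
        congr 1
        omega
      linear_combination (-(r.choose t : ℝ) * (s.choose t : ℝ) * (1 + z) ^ t) * hzp
    · rw [Nat.choose_eq_zero_of_lt hts]
      simp
  · rw [Nat.choose_eq_zero_of_lt htr]
    simp
/-- The key Hankel factorization identity. -/
lemma key (m i j : ℕ) (z : ℝ) :
    (∑ k ∈ Finset.range (i + j + 1), V m (i + j) k * z ^ k) =
    ∑ t ∈ Finset.range (i + j + 1),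
      (∑ r ∈ Finset.range (i + 1), V m i r * (r.choose t : ℝ) * z ^ (r - t)) *
        (∑ s ∈ Finset.range (j + 1), V m j s * (s.choose t : ℝ) * z ^ (s - t)) *
        (z * (z + 1)) ^ t := by
  have hNewton : ∀ (n : ℕ) (a : ℕ), a ≤ i + j → ((m : ℝ) * a + 1) ^ n =
      ∑ r ∈ Finset.range (i + j + 1), (a.choose r : ℝ) * V m n r := by
    intro n a ha
    have h := newton (fun b : ℕ => ((m : ℝ) * b + 1) ^ n) a (i + j) ha
    simp only [← V_eq_fwdDiff] at h
    exact h
  -- abbreviations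
  set R := Finset.range (i + j + 1) with hR
  -- LHS to middle form
  have hmid : (∑ k ∈ R, V m (i + j) k * z ^ k) =
      ∑ r ∈ Finset.range (i + 1), ∑ s ∈ Finset.range (j + 1),
        (V m i r * V m j s) *
          ∑ t ∈ R, (r.choose t : ℝ) * (s.choose t : ℝ) *
            z ^ (r - t) * z ^ (s - t) * (z * (z + 1)) ^ t := by
    calc ∑ k ∈ R, V m (i + j) k * z ^ k
        = ∑ k ∈ R, ∑ a ∈ Finset.range (k + 1),
            z ^ k * ((-1 : ℝ) ^ (k - a) * (k.choose a : ℝ)) *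
              (((m : ℝ) * a + 1) ^ i * ((m : ℝ) * a + 1) ^ j) := by
          refine Finset.sum_congr rfl fun k _ => ?_
          rw [V, Finset.sum_mul]
          refine Finset.sum_congr rfl fun a _ => ?_
          rw [← pow_add]
          ring
      _ = ∑ k ∈ R, ∑ a ∈ Finset.range (k + 1),
            z ^ k * ((-1 : ℝ) ^ (k - a) * (k.choose a : ℝ)) *
              ((∑ r ∈ R, (a.choose r : ℝ) * V m i r) * (∑ s ∈ R, (a.choose s : ℝ) * V m j s)) := by
          refine Finset.sum_congr rfl fun k hk => Finset.sum_congr rfl fun a ha => ?_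
          rw [hR, Finset.mem_range] at hk
          rw [Finset.mem_range] at ha
          rw [← hNewton i a (by omega), ← hNewton j a (by omega)]
      _ = ∑ k ∈ R, ∑ a ∈ Finset.range (k + 1), ∑ r ∈ R, ∑ s ∈ R,
            z ^ k * ((-1 : ℝ) ^ (k - a) * (k.choose a : ℝ)) *
              ((a.choose r : ℝ) * V m i r * ((a.choose s : ℝ) * V m j s)) := by
          refine Finset.sum_congr rfl fun k _ => Finset.sum_congr rfl fun a _ => ?_
          rw [Finset.sum_mul_sum, Finset.mul_sum]
          exact Finset.sum_congr rfl fun r _ => Finset.mul_sum _ _ _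
      _ = ∑ r ∈ R, ∑ s ∈ R, ∑ k ∈ R, ∑ a ∈ Finset.range (k + 1),
            z ^ k * ((-1 : ℝ) ^ (k - a) * (k.choose a : ℝ)) *
              ((a.choose r : ℝ) * V m i r * ((a.choose s : ℝ) * V m j s)) := by
          rw [show (∑ k ∈ R, ∑ a ∈ Finset.range (k + 1), ∑ r ∈ R, ∑ s ∈ R,
            z ^ k * ((-1 : ℝ) ^ (k - a) * (k.choose a : ℝ)) *
              ((a.choose r : ℝ) * V m i r * ((a.choose s : ℝ) * V m j s))) =
            ∑ k ∈ R, ∑ r ∈ R, ∑ s ∈ R, ∑ a ∈ Finset.range (k + 1),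
            z ^ k * ((-1 : ℝ) ^ (k - a) * (k.choose a : ℝ)) *
              ((a.choose r : ℝ) * V m i r * ((a.choose s : ℝ) * V m j s)) from
            Finset.sum_congr rfl fun k _ => by
              rw [Finset.sum_comm]
              exact Finset.sum_congr rfl fun r _ => Finset.sum_comm]
          rw [Finset.sum_comm]
          exact Finset.sum_congr rfl fun r _ => Finset.sum_comm
      _ = ∑ r ∈ R, ∑ s ∈ R, (V m i r * V m j s) *
            ∑ k ∈ R, z ^ k * (k.choose r : ℝ) *
              (if k - r ≤ s then ((r.choose (s - (k - r)) : ℕ) : ℝ) else 0) := by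
          refine Finset.sum_congr rfl fun r _ => Finset.sum_congr rfl fun s _ => ?_
          rw [Finset.mul_sum]
          refine Finset.sum_congr rfl fun k _ => ?_
          have expand : V m i r * V m j s * (z ^ k *
              ∑ a ∈ Finset.range (k + 1), (-1 : ℝ) ^ (k - a) * (k.choose a : ℝ) *
                ((a.choose r : ℝ) * (a.choose s : ℝ))) =
              ∑ a ∈ Finset.range (k + 1),
                z ^ k * ((-1 : ℝ) ^ (k - a) * (k.choose a : ℝ)) *
                  ((a.choose r : ℝ) * V m i r * ((a.choose s : ℝ) * V m j s)) := by
            rw [Finset.mul_sum, Finset.mul_sum]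
            exact Finset.sum_congr rfl fun a _ => by ring
          rw [← expand, quad_sum k r s]
          ring
      _ = ∑ r ∈ Finset.range (i + 1), ∑ s ∈ R, (V m i r * V m j s) *
            ∑ k ∈ R, z ^ k * (k.choose r : ℝ) *
              (if k - r ≤ s then ((r.choose (s - (k - r)) : ℕ) : ℝ) else 0) := by
          refine (Finset.sum_subset (by rw [hR]; exact Finset.range_subset_range.2 (by omega)) ?_).symm
          intro r _ hr
          rw [Finset.mem_range, not_lt] at hr
          refine Finset.sum_eq_zero fun s _ => ?_
          rw [V_vanish m i r (by omega)]
          ring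
      _ = ∑ r ∈ Finset.range (i + 1), ∑ s ∈ Finset.range (j + 1), (V m i r * V m j s) *
            ∑ k ∈ R, z ^ k * (k.choose r : ℝ) *
              (if k - r ≤ s then ((r.choose (s - (k - r)) : ℕ) : ℝ) else 0) := by
          refine Finset.sum_congr rfl fun r _ => ?_
          refine (Finset.sum_subset (by rw [hR]; exact Finset.range_subset_range.2 (by omega)) ?_).symm
          intro s _ hs
          rw [Finset.mem_range, not_lt] at hs
          rw [V_vanish m j s (by omega)]
          ring
      _ = ∑ r ∈ Finset.range (i + 1), ∑ s ∈ Finset.range (j + 1), (V m i r * V m j s) *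
            ∑ t ∈ R, (r.choose t : ℝ) * (s.choose t : ℝ) *
              z ^ (r - t) * z ^ (s - t) * (z * (z + 1)) ^ t := by
          refine Finset.sum_congr rfl fun r hr => Finset.sum_congr rfl fun s hs => ?_
          rw [Finset.mem_range] at hr hs
          congr 1
          have hrs : r + s + 1 ≤ i + j + 1 := by omega
          calc ∑ k ∈ R, z ^ k * (k.choose r : ℝ) *
                (if k - r ≤ s then ((r.choose (s - (k - r)) : ℕ) : ℝ) else 0)
              = ∑ k ∈ Finset.range (r + s + 1), z ^ k * (k.choose r : ℝ) *
                (if k - r ≤ s then ((r.choose (s - (k - r)) : ℕ) : ℝ) else 0) := by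
                refine (Finset.sum_subset (by rw [hR]; exact Finset.range_subset_range.2 hrs) ?_).symm
                intro k hk hk'
                rw [Finset.mem_range, not_lt] at hk'
                rcases le_or_gt r k with hrk | hrk
                · rw [if_neg (by omega)]
                  ring
                · rw [Nat.choose_eq_zero_of_lt hrk]
                  simp
            _ = ∑ t ∈ Finset.range (r + s + 1), (r.choose t : ℝ) * (s.choose t : ℝ) *
                z ^ (r - t) * z ^ (s - t) * (z * (z + 1)) ^ t := inner_sum z r s
            _ = ∑ t ∈ R, (r.choose t : ℝ) * (s.choose t : ℝ) *
                z ^ (r - t) * z ^ (s - t) * (z * (z + 1)) ^ t := by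
                refine Finset.sum_subset (by rw [hR]; exact Finset.range_subset_range.2 hrs) ?_
                intro t _ ht'
                rw [Finset.mem_range, not_lt] at ht'
                rw [Nat.choose_eq_zero_of_lt (by omega : r < t)]
                simp
  rw [hmid]
  -- RHS to middle form
  calc ∑ r ∈ Finset.range (i + 1), ∑ s ∈ Finset.range (j + 1),
        (V m i r * V m j s) * ∑ t ∈ R, (r.choose t : ℝ) * (s.choose t : ℝ) *
          z ^ (r - t) * z ^ (s - t) * (z * (z + 1)) ^ t
      = ∑ r ∈ Finset.range (i + 1), ∑ s ∈ Finset.range (j + 1), ∑ t ∈ R,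
          (V m i r * (r.choose t : ℝ) * z ^ (r - t)) *
            (V m j s * (s.choose t : ℝ) * z ^ (s - t)) * (z * (z + 1)) ^ t := by
        refine Finset.sum_congr rfl fun r _ => Finset.sum_congr rfl fun s _ => ?_
        rw [Finset.mul_sum]
        exact Finset.sum_congr rfl fun t _ => by ring
    _ = ∑ t ∈ R, ∑ r ∈ Finset.range (i + 1), ∑ s ∈ Finset.range (j + 1),
          (V m i r * (r.choose t : ℝ) * z ^ (r - t)) *
            (V m j s * (s.choose t : ℝ) * z ^ (s - t)) * (z * (z + 1)) ^ t := by
        rw [show (∑ r ∈ Finset.range (i + 1), ∑ s ∈ Finset.range (j + 1), ∑ t ∈ R,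
          (V m i r * (r.choose t : ℝ) * z ^ (r - t)) *
            (V m j s * (s.choose t : ℝ) * z ^ (s - t)) * (z * (z + 1)) ^ t) =
          ∑ r ∈ Finset.range (i + 1), ∑ t ∈ R, ∑ s ∈ Finset.range (j + 1),
          (V m i r * (r.choose t : ℝ) * z ^ (r - t)) *
            (V m j s * (s.choose t : ℝ) * z ^ (s - t)) * (z * (z + 1)) ^ t from
          Finset.sum_congr rfl fun r _ => Finset.sum_comm]
        exact Finset.sum_comm
    _ = ∑ t ∈ R, (∑ r ∈ Finset.range (i + 1), V m i r * (r.choose t : ℝ) * z ^ (r - t)) *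
          (∑ s ∈ Finset.range (j + 1), V m j s * (s.choose t : ℝ) * z ^ (s - t)) *
          (z * (z + 1)) ^ t := by
        refine Finset.sum_congr rfl fun t _ => Eq.symm ?_
        rw [Finset.sum_mul_sum, Finset.sum_mul]
        refine Finset.sum_congr rfl fun r _ => ?_
        rw [Finset.sum_mul]
lemma sum_range_id_choose (n : ℕ) : ∑ k ∈ Finset.range (n + 1), k = (n + 1).choose 2 := by
  induction n with
  | zero => rfl
  | succ n ih =>
    rw [Finset.sum_range_succ, ih,
      show ((n + 1) + 1).choose 2 = (n + 1).choose 1 + (n + 1).choose 2 from rfl,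
      Nat.choose_one_right]
    omega

lemma U_zero (m : ℕ) (z : ℝ) (i t : ℕ) (h : i < t) :
    ∑ r ∈ Finset.range (i + 1), V m i r * (r.choose t : ℝ) * z ^ (r - t) = 0 := by
  refine Finset.sum_eq_zero fun r hr => ?_
  rw [Finset.mem_range] at hr
  rw [Nat.choose_eq_zero_of_lt (by omega : r < t)]
  simp

lemma U_diag (m : ℕ) (z : ℝ) (i : ℕ) :
    ∑ r ∈ Finset.range (i + 1), V m i r * (r.choose i : ℝ) * z ^ (r - i) =
      (m : ℝ) ^ i * i.factorial := by
  rw [Finset.sum_range_succ, Finset.sum_eq_zero, Nat.choose_self, Nat.sub_self]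
  · rw [V_diag]
    simp
  · intro r hr
    rw [Finset.mem_range] at hr
    rw [Nat.choose_eq_zero_of_lt hr]
    simp

end TDH

namespace TDH

lemma tannyDowling_eq (m n : ℕ) (hm : (m : ℝ) ≠ 0) (x : ℝ) :
    tannyDowling m n x = ∑ k ∈ Finset.range (n + 1), V m n k * (x / m) ^ k := by
  refine Finset.sum_congr rfl fun k _ => ?_
  rw [whitney2, div_pow]
  have h1 : ((k.factorial : ℕ) : ℝ) ≠ 0 := Nat.cast_ne_zero.2 k.factorial_ne_zero
  have h2 : ((m : ℝ) ^ k) ≠ 0 := pow_ne_zero k hm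
  rw [V]
  field_simp

end TDH

/-- The Hankel determinant of the Tanny–Dowling polynomials is
`(x(x+m))^{C(n+1,2)} ∏_{k=0}^n (k!)²`. -/
theorem tannyDowling_hankel (m : ℕ) (hm : 0 < m) (x : ℝ) (n : ℕ) :
    Matrix.det (Matrix.of fun i j : Fin (n + 1) => tannyDowling m ((i : ℕ) + (j : ℕ)) x) =
      (x * (x + m)) ^ ((n + 1).choose 2) *
        ∏ k ∈ Finset.range (n + 1), (k.factorial : ℝ) ^ 2 := by
  have hm0 : (m : ℝ) ≠ 0 := Nat.cast_ne_zero.2 hm.ne'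
  set z : ℝ := x / m with hz
  set A : Matrix (Fin (n + 1)) (Fin (n + 1)) ℝ := Matrix.of fun i t : Fin (n + 1) =>
    ∑ r ∈ Finset.range ((i : ℕ) + 1),
      TDH.V m (i : ℕ) r * ((r.choose (t : ℕ)) : ℝ) * z ^ (r - (t : ℕ)) with hA
  set D : Matrix (Fin (n + 1)) (Fin (n + 1)) ℝ :=
    Matrix.diagonal fun t : Fin (n + 1) => (z * (z + 1)) ^ (t : ℕ) with hD
  have hHankel : (Matrix.of fun i j : Fin (n + 1) => tannyDowling m ((i : ℕ) + (j : ℕ)) x) =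
      A * D * A.transpose := by
    ext i j
    have hADA : (A * D * A.transpose) i j =
        ∑ t : Fin (n + 1), (A i t * (z * (z + 1)) ^ (t : ℕ)) * A j t := by
      rw [Matrix.mul_apply]
      refine Finset.sum_congr rfl fun t _ => ?_
      rw [Matrix.transpose_apply, hD, Matrix.mul_diagonal]
    rw [Matrix.of_apply, hADA]
    have hsum : ∀ N : ℕ, (i : ℕ) ≤ N →
        (∑ t ∈ Finset.range (N + 1),
          (∑ r ∈ Finset.range ((i : ℕ) + 1),
              TDH.V m (i : ℕ) r * ((r.choose t) : ℝ) * z ^ (r - t)) *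
          (∑ s ∈ Finset.range ((j : ℕ) + 1),
              TDH.V m (j : ℕ) s * ((s.choose t) : ℝ) * z ^ (s - t)) *
          (z * (z + 1)) ^ t) =
        ∑ t ∈ Finset.range ((i : ℕ) + 1),
          (∑ r ∈ Finset.range ((i : ℕ) + 1),
              TDH.V m (i : ℕ) r * ((r.choose t) : ℝ) * z ^ (r - t)) *
          (∑ s ∈ Finset.range ((j : ℕ) + 1),
              TDH.V m (j : ℕ) s * ((s.choose t) : ℝ) * z ^ (s - t)) *
          (z * (z + 1)) ^ t := by
      intro N hN
      refine (Finset.sum_subset (Finset.range_subset_range.2 (by omega)) fun t _ ht => ?_).symm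
      rw [Finset.mem_range, not_lt] at ht
      rw [TDH.U_zero m z (i : ℕ) t (by omega)]
      ring
    calc tannyDowling m ((i : ℕ) + (j : ℕ)) x
        = ∑ k ∈ Finset.range ((i : ℕ) + (j : ℕ) + 1), TDH.V m ((i : ℕ) + (j : ℕ)) k * z ^ k :=
          TDH.tannyDowling_eq m _ hm0 x
      _ = ∑ t ∈ Finset.range ((i : ℕ) + (j : ℕ) + 1),
            (∑ r ∈ Finset.range ((i : ℕ) + 1),
                TDH.V m (i : ℕ) r * ((r.choose t) : ℝ) * z ^ (r - t)) *
            (∑ s ∈ Finset.range ((j : ℕ) + 1),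
                TDH.V m (j : ℕ) s * ((s.choose t) : ℝ) * z ^ (s - t)) *
            (z * (z + 1)) ^ t := TDH.key m (i : ℕ) (j : ℕ) z
      _ = ∑ t ∈ Finset.range ((i : ℕ) + 1), _ := hsum ((i : ℕ) + (j : ℕ)) (by omega)
      _ = ∑ t ∈ Finset.range (n + 1),
            (∑ r ∈ Finset.range ((i : ℕ) + 1),
                TDH.V m (i : ℕ) r * ((r.choose t) : ℝ) * z ^ (r - t)) *
            (∑ s ∈ Finset.range ((j : ℕ) + 1),
                TDH.V m (j : ℕ) s * ((s.choose t) : ℝ) * z ^ (s - t)) *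
            (z * (z + 1)) ^ t := (hsum n (by omega)).symm
      _ = ∑ t : Fin (n + 1), (A i t * (z * (z + 1)) ^ (t : ℕ)) * A j t := by
          rw [Finset.sum_range fun t =>
            (∑ r ∈ Finset.range ((i : ℕ) + 1),
                TDH.V m (i : ℕ) r * ((r.choose t) : ℝ) * z ^ (r - t)) *
            (∑ s ∈ Finset.range ((j : ℕ) + 1),
                TDH.V m (j : ℕ) s * ((s.choose t) : ℝ) * z ^ (s - t)) *
            (z * (z + 1)) ^ t]
          refine Finset.sum_congr rfl fun t _ => ?_
          rw [hA]
          simp only [Matrix.of_apply]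
          ring
  rw [hHankel, Matrix.det_mul, Matrix.det_mul, Matrix.det_transpose]
  have hAtri : A.BlockTriangular OrderDual.toDual := by
    intro i j hij
    have : (i : ℕ) < (j : ℕ) := hij
    exact TDH.U_zero m z (i : ℕ) (j : ℕ) this
  have hdetA : A.det = ∏ k ∈ Finset.range (n + 1), (m : ℝ) ^ k * k.factorial := by
    rw [Matrix.det_of_lowerTriangular A hAtri]
    rw [Fin.prod_univ_eq_prod_range (fun k => (m : ℝ) ^ k * k.factorial) (n + 1) |>.symm]
    refine Finset.prod_congr rfl fun t _ => ?_
    rw [hA]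
    simp only [Matrix.of_apply]
    exact TDH.U_diag m z (t : ℕ)
  have hdetD : D.det = ∏ k ∈ Finset.range (n + 1), (z * (z + 1)) ^ k := by
    rw [hD, Matrix.det_diagonal]
    exact Fin.prod_univ_eq_prod_range (fun k => (z * (z + 1)) ^ k) (n + 1)
  rw [hdetA, hdetD]
  have hxz : ∀ k : ℕ, ((m : ℝ) ^ k * k.factorial) * (z * (z + 1)) ^ k *
      ((m : ℝ) ^ k * k.factorial) = (k.factorial : ℝ) ^ 2 * (x * (x + m)) ^ k := by
    intro k
    have h1 : ((m : ℝ) ^ k * (m : ℝ) ^ k) * (z * (z + 1)) ^ k = (x * (x + m)) ^ k := by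
      rw [← mul_pow, ← mul_pow]
      congr 1
      rw [hz]
      field_simp
    calc ((m : ℝ) ^ k * k.factorial) * (z * (z + 1)) ^ k * ((m : ℝ) ^ k * k.factorial)
        = (k.factorial : ℝ) ^ 2 * (((m : ℝ) ^ k * (m : ℝ) ^ k) * (z * (z + 1)) ^ k) := by ring
      _ = (k.factorial : ℝ) ^ 2 * (x * (x + m)) ^ k := by rw [h1]
  calc (∏ k ∈ Finset.range (n + 1), (m : ℝ) ^ k * k.factorial) *
        (∏ k ∈ Finset.range (n + 1), (z * (z + 1)) ^ k) *
        (∏ k ∈ Finset.range (n + 1), (m : ℝ) ^ k * k.factorial)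
      = ∏ k ∈ Finset.range (n + 1),
          ((m : ℝ) ^ k * k.factorial) * (z * (z + 1)) ^ k * ((m : ℝ) ^ k * k.factorial) := by
        rw [← Finset.prod_mul_distrib, ← Finset.prod_mul_distrib]
    _ = ∏ k ∈ Finset.range (n + 1), (k.factorial : ℝ) ^ 2 * (x * (x + m)) ^ k := by
        exact Finset.prod_congr rfl fun k _ => hxz k
    _ = (∏ k ∈ Finset.range (n + 1), (k.factorial : ℝ) ^ 2) *
          ∏ k ∈ Finset.range (n + 1), (x * (x + m)) ^ k := Finset.prod_mul_distrib
    _ = (x * (x + m)) ^ ((n + 1).choose 2) * ∏ k ∈ Finset.range (n + 1), (k.factorial : ℝ) ^ 2 := by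
        rw [Finset.prod_pow_eq_pow_sum, TDH.sum_range_id_choose]
        ring
end

section
/- Let m be a positive integer and x a real number. Then in ℝ[[z]] the exponential generating function of the Eulerian-Dowling polynomials satisfies (e^{mz(x−1)} − (mx − m + 1)) · ∑_{n≥0} 𝓐_m(n,x) z^n/n! = m(1−x)·e^{z(x−1)}. -/
/-- Eulerian–Dowling polynomials `𝓐_m(n,x) = ∑_{k=0}^n k!·W_m(n,k)·(x−1)^{n−k}`. -/
noncomputable def eulerianDowling (m n : ℕ) (x : ℝ) : ℝ :=
  ∑ k ∈ Finset.range (n + 1), (k.factorial : ℝ) * whitney2 m n k * (x - 1) ^ (n - k)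

open Finset

/-- The `l`-th finite difference `Δ_l(n) = ∑_{i=0}^l (-1)^{l-i} C(l,i) (mi+1)^n`. -/
noncomputable def dlt (m l n : ℕ) : ℝ :=
  ∑ i ∈ Finset.range (l + 1), (-1 : ℝ) ^ (l - i) * (l.choose i) * ((m : ℝ) * i + 1) ^ n

lemma diff_step (l : ℕ) (f : ℕ → ℝ) :
    ∑ i ∈ range (l + 2), (-1 : ℝ) ^ (l + 1 - i) * ((l + 1).choose i) * f i
      = (∑ i ∈ range (l + 1), (-1 : ℝ) ^ (l - i) * (l.choose i) * f (i + 1))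
        - ∑ i ∈ range (l + 1), (-1 : ℝ) ^ (l - i) * (l.choose i) * f i := by
  rw [Finset.sum_range_succ' _ (l + 1)]
  have h1 : ∀ i ∈ range (l + 1),
      (-1 : ℝ) ^ (l + 1 - (i + 1)) * ((l + 1).choose (i + 1)) * f (i + 1)
      = (-1 : ℝ) ^ (l - i) * (l.choose i) * f (i + 1)
        + (-1 : ℝ) ^ (l - i) * (l.choose (i + 1)) * f (i + 1) := by
    intro i hi
    rw [Nat.succ_sub_succ, Nat.choose_succ_succ]
    push_cast
    ring
  rw [Finset.sum_congr rfl h1, Finset.sum_add_distrib]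
  have h2 : ∑ i ∈ range (l + 1), (-1 : ℝ) ^ (l - i) * (l.choose (i + 1)) * f (i + 1)
      = ∑ i ∈ range l, (-1 : ℝ) ^ (l - i) * (l.choose (i + 1)) * f (i + 1) := by
    rw [Finset.sum_range_succ, Nat.choose_succ_self]
    simp
  have h3 : ∑ i ∈ range l, (-1 : ℝ) ^ (l - i) * (l.choose (i + 1)) * f (i + 1)
      = - ∑ i ∈ range l, (-1 : ℝ) ^ (l - (i + 1)) * (l.choose (i + 1)) * f (i + 1) := by
    rw [← Finset.sum_neg_distrib]
    refine Finset.sum_congr rfl fun i hi => ?_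
    have hil : i < l := Finset.mem_range.mp hi
    have : l - i = (l - (i + 1)) + 1 := by omega
    rw [this, pow_succ]
    ring
  have h4 : ∑ i ∈ range (l + 1), (-1 : ℝ) ^ (l - i) * (l.choose i) * f i
      = (∑ i ∈ range l, (-1 : ℝ) ^ (l - (i + 1)) * (l.choose (i + 1)) * f (i + 1))
        + (-1 : ℝ) ^ l * f 0 := by
    rw [Finset.sum_range_succ' _ l]
    simp
  rw [h2, h3, h4]
  simp [pow_succ]
  ring

lemma dlt_succ (m l n : ℕ) :
    dlt m (l + 1) n =
      (∑ j ∈ range (n + 1), (n.choose j : ℝ) * (m : ℝ) ^ (n - j) * dlt m l j) - dlt m l n := by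
  have := diff_step l (fun i => ((m : ℝ) * i + 1) ^ n)
  rw [dlt]
  rw [show l + 1 + 1 = l + 2 from rfl, this]
  have key : ∑ i ∈ range (l + 1), (-1 : ℝ) ^ (l - i) * (l.choose i) * ((m : ℝ) * (i + 1) + 1) ^ n
      = ∑ j ∈ range (n + 1), (n.choose j : ℝ) * (m : ℝ) ^ (n - j) * dlt m l j := by
    have expand : ∀ i : ℕ, ((m : ℝ) * (i + 1) + 1) ^ n
        = ∑ j ∈ range (n + 1), ((m : ℝ) * i + 1) ^ j * (m : ℝ) ^ (n - j) * (n.choose j) := by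
      intro i
      have : (m : ℝ) * (i + 1) + 1 = ((m : ℝ) * i + 1) + (m : ℝ) := by ring
      rw [this, add_pow]
    calc ∑ i ∈ range (l + 1), (-1 : ℝ) ^ (l - i) * (l.choose i) * ((m : ℝ) * (i + 1) + 1) ^ n
        = ∑ i ∈ range (l + 1), ∑ j ∈ range (n + 1),
            (n.choose j : ℝ) * (m : ℝ) ^ (n - j)
              * ((-1 : ℝ) ^ (l - i) * (l.choose i) * ((m : ℝ) * i + 1) ^ j) := by
          refine Finset.sum_congr rfl fun i _ => ?_
          rw [expand i, Finset.mul_sum]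
          exact Finset.sum_congr rfl fun j _ => by ring
      _ = ∑ j ∈ range (n + 1), (n.choose j : ℝ) * (m : ℝ) ^ (n - j) * dlt m l j := by
          rw [Finset.sum_comm]
          exact Finset.sum_congr rfl fun j _ => by rw [dlt, Finset.mul_sum]
  push_cast
  push_cast at key
  rw [key, dlt]

lemma dlt_vanish (m : ℕ) : ∀ l n : ℕ, n < l → dlt m l n = 0 := by
  intro l
  induction l with
  | zero => intro n hn; omega
  | succ l ih =>
    intro n hn
    rw [dlt_succ, Finset.sum_range_succ]
    have h1 : ∀ j ∈ range n, (n.choose j : ℝ) * (m : ℝ) ^ (n - j) * dlt m l j = 0 := by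
      intro j hj
      rw [ih j (by have := Finset.mem_range.mp hj; omega)]
      ring
    rw [Finset.sum_eq_zero h1]
    simp

lemma dlt_rec (m l n : ℕ) :
    dlt m (l + 1) n = ∑ p ∈ range n, (n.choose p : ℝ) * (m : ℝ) ^ (n - p) * dlt m l p := by
  rw [dlt_succ, Finset.sum_range_succ]
  simp

lemma ed_eq (m n : ℕ) (x : ℝ) :
    eulerianDowling m n x
      = ∑ k ∈ range (n + 1), ((m : ℝ) ^ k)⁻¹ * dlt m k n * (x - 1) ^ (n - k) := by
  unfold eulerianDowling whitney2 dlt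
  refine Finset.sum_congr rfl fun k _ => ?_
  have hk : (k.factorial : ℝ) ≠ 0 := Nat.cast_ne_zero.mpr k.factorial_ne_zero
  have h : (k.factorial : ℝ) * ((1 : ℝ) / ((m : ℝ) ^ k * k.factorial)) = ((m : ℝ) ^ k)⁻¹ := by
    rw [one_div, mul_inv, mul_comm (((m : ℝ) ^ k)⁻¹), ← mul_assoc,
      mul_inv_cancel₀ hk, one_mul]
  rw [← mul_assoc, h]

lemma key_id (m : ℕ) (hm : (m : ℝ) ≠ 0) (x : ℝ) (n : ℕ) :
    (∑ p ∈ range (n + 1),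
        ((m : ℝ) * (x - 1)) ^ (n - p) / (n - p).factorial
          * (eulerianDowling m p x / p.factorial))
      - ((m : ℝ) * x - m + 1) * (eulerianDowling m n x / n.factorial)
    = (m : ℝ) * (1 - x) * ((x - 1) ^ n / n.factorial) := by
  set y : ℝ := x - 1 with hy
  rw [Finset.sum_range_succ]
  simp only [Nat.sub_self, pow_zero, Nat.factorial_zero]
  have hcx : (m : ℝ) * x - m + 1 = (m : ℝ) * y + 1 := by rw [hy]; ring
  have hrhs : (m : ℝ) * (1 - x) * ((x - 1) ^ n / n.factorial)
      = -((m : ℝ) * (y * y ^ n)) / n.factorial := by rw [hy]; ring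
  rw [hcx, hrhs]
  have hT : ∑ p ∈ range n,
      ((m : ℝ) * y) ^ (n - p) / (n - p).factorial * (eulerianDowling m p x / p.factorial)
      = ∑ k ∈ range n, (m : ℝ) * y * ((m : ℝ) ^ (k + 1))⁻¹ * dlt m (k + 1) n
          * y ^ (n - (k + 1)) / n.factorial := by
    have step1 : ∀ p ∈ range n,
        ((m : ℝ) * y) ^ (n - p) / (n - p).factorial * (eulerianDowling m p x / p.factorial)
        = ∑ k ∈ range n, ((m : ℝ) * y) ^ (n - p) / (n - p).factorial
            * (((m : ℝ) ^ k)⁻¹ * dlt m k p * y ^ (p - k)) / p.factorial := by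
      intro p hp
      have hpn : p + 1 ≤ n := Finset.mem_range.mp hp
      rw [ed_eq, ← hy]
      rw [Finset.sum_div, Finset.mul_sum]
      rw [← Finset.sum_subset (Finset.range_subset_range.mpr hpn)]
      · exact Finset.sum_congr rfl fun k _ => by ring
      · intro k hk hknot
        have : p < k := by
          have := Finset.mem_range.mp hk
          simp only [Finset.mem_range] at hknot
          omega
        rw [dlt_vanish m k p this]
        ring
    rw [Finset.sum_congr rfl step1, Finset.sum_comm]
    refine Finset.sum_congr rfl fun k hk => ?_
    have hkn : k < n := Finset.mem_range.mp hk
    rw [dlt_rec, Finset.mul_sum, Finset.sum_mul, Finset.sum_div]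
    refine Finset.sum_congr rfl fun p hp => ?_
    have hpn : p < n := Finset.mem_range.mp hp
    by_cases hkp : k ≤ p
    · have hfac : ((n.choose p : ℝ)) * p.factorial * (n - p).factorial = n.factorial := by
        exact_mod_cast congrArg (Nat.cast : ℕ → ℝ)
          (Nat.choose_mul_factorial_mul_factorial (le_of_lt hpn))
      have hfp : (p.factorial : ℝ) ≠ 0 := Nat.cast_ne_zero.mpr p.factorial_ne_zero
      have hfnp : ((n - p).factorial : ℝ) ≠ 0 := Nat.cast_ne_zero.mpr (n - p).factorial_ne_zero
      have hfn : (n.factorial : ℝ) ≠ 0 := Nat.cast_ne_zero.mpr n.factorial_ne_zero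
      have e1 : y ^ (n - p) * y ^ (p - k) = y * y ^ (n - (k + 1)) := by
        rw [← pow_add,
          show y * y ^ (n - (k + 1)) = y ^ (1 + (n - (k + 1))) by rw [pow_add, pow_one]]
        congr 1
        omega
      have e2 : (m : ℝ) ^ (n - p) * ((m : ℝ) ^ k)⁻¹
          = (m : ℝ) * ((m : ℝ) ^ (k + 1))⁻¹ * (m : ℝ) ^ (n - p) := by
        rw [pow_succ, mul_inv]
        have hmk : ((m : ℝ) ^ k) ≠ 0 := pow_ne_zero _ hm
        field_simp
      have e3 : (1 : ℝ) / ((n - p).factorial * p.factorial) = (n.choose p : ℝ) / n.factorial := by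
        rw [div_eq_div_iff (by positivity) hfn, one_mul, ← hfac]
        ring
      calc ((m : ℝ) * y) ^ (n - p) / (n - p).factorial
            * (((m : ℝ) ^ k)⁻¹ * dlt m k p * y ^ (p - k)) / p.factorial
          = ((m : ℝ) ^ (n - p) * ((m : ℝ) ^ k)⁻¹) * (y ^ (n - p) * y ^ (p - k)) * dlt m k p
            * ((1 : ℝ) / ((n - p).factorial * p.factorial)) := by
            rw [mul_pow]; ring
        _ = (m : ℝ) * y * ((m : ℝ) ^ (k + 1))⁻¹ * ((n.choose p : ℝ) * (m : ℝ) ^ (n - p)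
            * dlt m k p) * y ^ (n - (k + 1)) / n.factorial := by
            rw [e1, e2, e3]; ring
    · rw [dlt_vanish m k p (by omega)]
      ring
  rw [hT]
  rw [ed_eq, ← hy, Finset.sum_range_succ' _ n]
  simp only [pow_zero, inv_one, one_mul, Nat.sub_zero]
  have hdlt0 : dlt m 0 n = 1 := by simp [dlt]
  rw [hdlt0, one_mul]
  have hS : ∑ k ∈ range n, (m : ℝ) * y * ((m : ℝ) ^ (k + 1))⁻¹ * dlt m (k + 1) n
      * y ^ (n - (k + 1)) / n.factorial
      = (m : ℝ) * y *
        ((∑ k ∈ range n, ((m : ℝ) ^ (k + 1))⁻¹ * dlt m (k + 1) n * y ^ (n - (k + 1)))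
          / n.factorial) := by
    rw [Finset.sum_div, Finset.mul_sum]
    exact Finset.sum_congr rfl fun k _ => by ring
  rw [hS]
  push_cast
  ring

/-- The EGF of the Eulerian–Dowling polynomials satisfies
`(e^{mz(x−1)} − (mx − m + 1)) · ∑_{n≥0} 𝓐_m(n,x) z^n/n! = m(1−x)·e^{z(x−1)}` in `ℝ[[z]]`. -/
theorem eulerianDowling_egf (m : ℕ) (hm : 0 < m) (x : ℝ) :
    (PowerSeries.rescale ((m : ℝ) * (x - 1)) (PowerSeries.exp ℝ) -
        (PowerSeries.C : ℝ →+* PowerSeries ℝ) ((m : ℝ) * x - m + 1)) *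
      PowerSeries.mk (fun n => eulerianDowling m n x / n.factorial) =
      (PowerSeries.C : ℝ →+* PowerSeries ℝ) ((m : ℝ) * (1 - x)) *
        PowerSeries.rescale (x - 1) (PowerSeries.exp ℝ) := by
  have hm' : (m : ℝ) ≠ 0 := Nat.cast_ne_zero.mpr hm.ne'
  ext n
  rw [sub_mul, map_sub, PowerSeries.coeff_mul, PowerSeries.coeff_C_mul,
    PowerSeries.coeff_C_mul, PowerSeries.coeff_mk, PowerSeries.coeff_rescale,
    PowerSeries.coeff_exp, Finset.Nat.sum_antidiagonal_eq_sum_range_succ_mk]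
  simp only [PowerSeries.coeff_rescale, PowerSeries.coeff_exp, PowerSeries.coeff_mk]
  have hcast : ∀ k : ℕ, (algebraMap ℚ ℝ) (1 / (k.factorial : ℚ)) = 1 / (k.factorial : ℝ) := by
    intro k
    rw [map_div₀, map_one, map_natCast]
  simp only [hcast]
  have hsum : ∑ k ∈ range (n + 1),
      ((m : ℝ) * (x - 1)) ^ k * (1 / (k.factorial : ℝ))
        * (eulerianDowling m (n - k) x / (n - k).factorial)
      = ∑ p ∈ range (n + 1),
        ((m : ℝ) * (x - 1)) ^ (n - p) / (n - p).factorial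
          * (eulerianDowling m p x / p.factorial) := by
    rw [← Finset.sum_range_reflect]
    refine Finset.sum_congr rfl fun p hp => ?_
    have hpn : p ≤ n := by have := Finset.mem_range.mp hp; omega
    have h1 : n + 1 - 1 - p = n - p := by omega
    have h2 : n - (n - p) = p := by omega
    rw [h1, h2]
    ring
  rw [hsum, key_id m hm' x n]
  ring
end
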